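/- arXiv:1310.8532 — 9 statements merged into one kernel-verified Lean document; each statement's English description precedes it below -/
import Mathlib

section
/- The function G is strictly monotonically decreasing on (0,∞): for all 0 < s < t one has G(t) < G(s); in particular G is injective on (0,∞). (Lemma 3(ii)–(iii).) -/
open MeasureTheory Filter Set Topology

/-- The cumulative distribution function `F(t) = ∫₀^t f(γ) dγ`. -/
noncomputable def Fcdf (f : ℝ → ℝ) (t : ℝ) : ℝ := ∫ γ in (0:ℝ)..t, f γ

/-- The average-power function `G(t) = ∫_t^∞ (1/t − 1/γ) f(γ) dγ`. -/
noncomputable def Gfun (f : ℝ → ℝ) (t : ℝ) : ℝ := ∫ γ in Set.Ioi t, (1/t - 1/γ) * f γ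

lemma integ_aux (f : ℝ → ℝ) (hmeas : Measurable f) (hnn : ∀ x, 0 ≤ f x)
    (hint : IntegrableOn f (Set.Ioi (0:ℝ))) {c ε : ℝ} (hc : 0 < c) (hε : 0 < ε)
    {S : Set ℝ} (hS : MeasurableSet S) (hSsub : S ⊆ Set.Ioi ε) :
    IntegrableOn (fun γ => (1/c - 1/γ) * f γ) S := by
  have hfS : IntegrableOn f S := hint.mono_set (hSsub.trans (Set.Ioi_subset_Ioi hε.le))
  apply Integrable.mono' (hfS.const_mul (1/c + 1/ε))
  · exact ((by simp only [one_div]; exact (measurable_const.sub measurable_inv).mul hmeas : Measurable (fun γ : ℝ => (1/c - 1/γ) * f γ))).aestronglyMeasurable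
  · filter_upwards [ae_restrict_mem hS] with γ hγ
    have hγε : ε < γ := hSsub hγ
    have hγ0 : 0 < γ := hε.trans hγε
    have h1 : |1/c - 1/γ| ≤ 1/c + 1/ε := by
      have h2 : (0:ℝ) < 1/γ := by positivity
      have h3 : 1/γ ≤ 1/ε := one_div_le_one_div_of_le hε hγε.le
      rw [abs_sub_le_iff]
      constructor <;> nlinarith [one_div_pos.mpr hc]
    rw [Real.norm_eq_abs, abs_mul, abs_of_nonneg (hnn γ)]
    exact mul_le_mul_of_nonneg_right h1 (hnn γ)

/-- Lemma 3(ii)–(iii): `G` is strictly decreasing on `(0,∞)`, hence injective there. -/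
theorem G_strictAnti_and_injective (f : ℝ → ℝ)
    (hmeas : Measurable f)
    (hnn : ∀ x, 0 ≤ f x)
    (hzero : ∀ x ≤ (0:ℝ), f x = 0)
    (hint : IntegrableOn f (Set.Ioi (0:ℝ)))
    (hone : ∫ γ in Set.Ioi (0:ℝ), f γ = 1)
    (hsupp : ∀ t > (0:ℝ), Fcdf f t < 1) :
    (∀ s t : ℝ, 0 < s → s < t → Gfun f t < Gfun f s) ∧
      Set.InjOn (Gfun f) (Set.Ioi (0:ℝ)) := by
  have key : ∀ s t : ℝ, 0 < s → s < t → Gfun f t < Gfun f s := by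
    intro s t hs hst
    have ht : 0 < t := hs.trans hst
    have hIst : IntegrableOn (fun γ => (1/s - 1/γ) * f γ) (Set.Ioi t) :=
      integ_aux f hmeas hnn hint hs ht measurableSet_Ioi subset_rfl
    have hItt : IntegrableOn (fun γ => (1/t - 1/γ) * f γ) (Set.Ioi t) :=
      integ_aux f hmeas hnn hint ht ht measurableSet_Ioi subset_rfl
    have hIoc : IntegrableOn (fun γ => (1/s - 1/γ) * f γ) (Set.Ioc s t) :=
      integ_aux f hmeas hnn hint hs hs measurableSet_Ioc Set.Ioc_subset_Ioi_self
    -- split G s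
    have hsplit : Gfun f s = (∫ γ in Set.Ioc s t, (1/s - 1/γ) * f γ)
        + ∫ γ in Set.Ioi t, (1/s - 1/γ) * f γ := by
      rw [Gfun, ← Set.Ioc_union_Ioi_eq_Ioi hst.le,
        setIntegral_union (Set.Ioc_disjoint_Ioi le_rfl) measurableSet_Ioi hIoc hIst]
    have h1 : 0 ≤ ∫ γ in Set.Ioc s t, (1/s - 1/γ) * f γ := by
      apply setIntegral_nonneg measurableSet_Ioc
      intro γ hγ
      have : 1/γ ≤ 1/s := one_div_le_one_div_of_le hs hγ.1.le
      exact mul_nonneg (by linarith) (hnn γ)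
    have h2 : (∫ γ in Set.Ioi t, (1/s - 1/γ) * f γ)
        - (∫ γ in Set.Ioi t, (1/t - 1/γ) * f γ)
        = (1/s - 1/t) * ∫ γ in Set.Ioi t, f γ := by
      rw [← integral_sub hIst hItt, ← smul_eq_mul, ← integral_smul]
      congr 1
      funext γ
      simp only [smul_eq_mul]
      ring
    have hfIoc : IntegrableOn f (Set.Ioc 0 t) :=
      hint.mono_set Set.Ioc_subset_Ioi_self
    have hfIoi : IntegrableOn f (Set.Ioi t) :=
      hint.mono_set (Set.Ioi_subset_Ioi ht.le)
    have htail : 0 < ∫ γ in Set.Ioi t, f γ := by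
      have hsplit0 : (∫ γ in Set.Ioi (0:ℝ), f γ)
          = (∫ γ in Set.Ioc 0 t, f γ) + ∫ γ in Set.Ioi t, f γ := by
        rw [← Set.Ioc_union_Ioi_eq_Ioi ht.le,
          setIntegral_union (Set.Ioc_disjoint_Ioi le_rfl) measurableSet_Ioi hfIoc hfIoi]
      have hF : Fcdf f t = ∫ γ in Set.Ioc 0 t, f γ := by
        rw [Fcdf, intervalIntegral.integral_of_le ht.le]
      have := hsupp t ht
      rw [hone, ← hF] at hsplit0
      linarith
    have hpos : 0 < (1/s - 1/t) * ∫ γ in Set.Ioi t, f γ := by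
      have : 1/t < 1/s := one_div_lt_one_div_of_lt hs hst
      exact mul_pos (by linarith) htail
    rw [hsplit, Gfun]
    linarith
  have hA : StrictAntiOn (Gfun f) (Set.Ioi 0) := fun a ha b hb hab => key a b ha hab
  exact ⟨key, hA.injOn⟩
end

section
/- Suppose f is continuous on (0,∞) and that the generalized failure rate has a finite positive limit: t·f(t)/(1 − F(t)) → l as t → ∞, with 0 < l < ∞. Then t·G(t)/(1 − F(t)) → 1/(1 + l) as t → ∞. (Lemma 3(vi), finite-limit case.) -/
open MeasureTheory Filter Set Topology

/-- Derivative of a tail integral. -/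
lemma hasDerivAt_tail (φ : ℝ → ℝ) (a t : ℝ) (hat : a < t)
    (hφi : IntegrableOn φ (Set.Ioi a))
    (hφm : StronglyMeasurableAtFilter φ (𝓝 t))
    (hφc : ContinuousAt φ t) :
    HasDerivAt (fun x => ∫ γ in Set.Ioi x, φ γ) (-φ t) t := by
  have h2 : HasDerivAt (fun x => ∫ γ in a..x, φ γ) (φ t) t :=
    intervalIntegral.integral_hasDerivAt_right
      ((intervalIntegrable_iff_integrableOn_Ioc_of_le hat.le).mpr
        (hφi.mono_set Set.Ioc_subset_Ioi_self)) hφm hφc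
  have h1 : HasDerivAt (fun x => (∫ γ in Set.Ioi a, φ γ) - ∫ γ in a..x, φ γ) (-φ t) t := by
    exact ((hasDerivAt_const t (∫ γ in Set.Ioi a, φ γ)).sub h2).congr_deriv (by ring)
  refine h1.congr_of_eventuallyEq ?_
  filter_upwards [Ioi_mem_nhds hat] with x hx
  have hsplit := MeasureTheory.setIntegral_union (Set.Ioc_disjoint_Ioi le_rfl)
    measurableSet_Ioi (hφi.mono_set Set.Ioc_subset_Ioi_self)
    (hφi.mono_set (Set.Ioi_subset_Ioi hx.le)) (f := φ) (μ := volume)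
  rw [Set.Ioc_union_Ioi_eq_Ioi hx.le] at hsplit
  rw [intervalIntegral.integral_of_le hx.le, hsplit]; ring

/-- Lemma 3(vi), finite-limit case: if the generalized failure rate
`t·f(t)/(1 − F(t))` tends to `l ∈ (0,∞)`, then `t·G(t)/(1 − F(t)) → 1/(1 + l)`. -/
theorem t_mul_G_div_tail_tendsto_of_GFR_finite (f : ℝ → ℝ) (l : ℝ)
    (hmeas : Measurable f)
    (hnn : ∀ x, 0 ≤ f x)
    (hzero : ∀ x ≤ (0:ℝ), f x = 0)
    (hcont : ContinuousOn f (Set.Ioi (0:ℝ)))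
    (hint : IntegrableOn f (Set.Ioi (0:ℝ)))
    (hone : ∫ γ in Set.Ioi (0:ℝ), f γ = 1)
    (hsupp : ∀ t > (0:ℝ), Fcdf f t < 1)
    (hl : 0 < l)
    (hGFR : Tendsto (fun t => t * f t / (1 - Fcdf f t)) atTop (nhds l)) :
    Tendsto (fun t => t * Gfun f t / (1 - Fcdf f t)) atTop (nhds (1 / (1 + l))) := by
  set T : ℝ → ℝ := fun t => ∫ γ in Set.Ioi t, f γ with hTdef
  set H : ℝ → ℝ := fun t => ∫ γ in Set.Ioi t, (1/γ) * f γ with hHdef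
  set g : ℝ → ℝ := fun γ => (1/γ) * f γ with hgdef
  -- integrability
  have hintt : ∀ t : ℝ, 0 ≤ t → IntegrableOn f (Set.Ioi t) :=
    fun t ht => hint.mono_set (Set.Ioi_subset_Ioi ht)
  have hgmeas : Measurable g := (measurable_const.div measurable_id).mul hmeas
  have hintg : ∀ t : ℝ, 0 < t → IntegrableOn g (Set.Ioi t) := by
    intro t ht
    refine Integrable.mono (((hintt t ht.le).div_const t)) hgmeas.aestronglyMeasurable ?_
    filter_upwards [ae_restrict_mem measurableSet_Ioi] with γ hγ
    have hγ0 : 0 < γ := ht.trans hγ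
    rw [Real.norm_eq_abs, Real.norm_eq_abs,
      abs_of_nonneg (mul_nonneg (by positivity) (hnn γ)),
      abs_of_nonneg (div_nonneg (hnn γ) ht.le)]
    rw [one_div, inv_mul_eq_div]
    exact div_le_div_of_nonneg_left (hnn γ) ht (le_of_lt hγ)
  -- tail relation
  have hTF : ∀ t : ℝ, 0 < t → T t = 1 - Fcdf f t := by
    intro t ht
    have hsplit := MeasureTheory.setIntegral_union (Set.Ioc_disjoint_Ioi le_rfl)
      measurableSet_Ioi (hint.mono_set Set.Ioc_subset_Ioi_self)
      (hintt t ht.le) (f := f) (μ := volume)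
    rw [Set.Ioc_union_Ioi_eq_Ioi ht.le, hone] at hsplit
    rw [Fcdf, intervalIntegral.integral_of_le ht.le]
    simp only [hTdef]
    linarith
  have hTpos : ∀ t : ℝ, 0 < t → 0 < T t := by
    intro t ht; rw [hTF t ht]; linarith [hsupp t ht]
  have hFnn : ∀ t : ℝ, 0 < t → 0 ≤ Fcdf f t := by
    intro t ht
    exact intervalIntegral.integral_nonneg ht.le (fun x _ => hnn x)
  have hTle1 : ∀ t : ℝ, 0 < t → T t ≤ 1 := by
    intro t ht; rw [hTF t ht]; linarith [hFnn t ht]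
  have hHnn : ∀ t : ℝ, 0 ≤ H t := by
    intro t
    exact setIntegral_nonneg measurableSet_Ioi (fun γ _ => by
      rcases le_or_gt γ 0 with h | h
      · simp [hzero γ h]
      · exact mul_nonneg (by positivity) (hnn γ))
  have hHle : ∀ t : ℝ, 0 < t → H t ≤ (1/t) * T t := by
    intro t ht
    rw [hHdef, hTdef, ← integral_const_mul]
    refine setIntegral_mono_on (hintg t ht) ((hintt t ht.le).const_mul _)
      measurableSet_Ioi (fun γ hγ => ?_)
    have hγ0 : 0 < γ := ht.trans hγ
    have : (1:ℝ)/γ ≤ 1/t := by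
      apply div_le_div_of_nonneg_left one_pos.le ht (le_of_lt hγ)
    exact mul_le_mul_of_nonneg_right this (hnn γ)
  -- derivatives
  have hTderiv : ∀ t : ℝ, 0 < t → HasDerivAt T (-(f t)) t := by
    intro t ht
    exact hasDerivAt_tail f 0 t ht hint
      hmeas.stronglyMeasurable.stronglyMeasurableAtFilter
      (hcont.continuousAt (Ioi_mem_nhds ht))
  have hHderiv : ∀ t : ℝ, 0 < t → HasDerivAt H (-(g t)) t := by
    intro t ht
    have ha : (0:ℝ) < t/2 := by linarith
    exact hasDerivAt_tail g (t/2) t (by linarith) (hintg _ ha)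
      hgmeas.stronglyMeasurable.stronglyMeasurableAtFilter
      (((continuousAt_const.div continuousAt_id ht.ne')).mul
        (hcont.continuousAt (Ioi_mem_nhds ht)))
  -- limits to zero
  have hinv0 : Tendsto (fun t : ℝ => 1/t) atTop (𝓝 0) := by
    simpa [one_div] using tendsto_inv_atTop_zero (𝕜 := ℝ)
  have hH0 : Tendsto H atTop (𝓝 0) := by
    refine tendsto_of_tendsto_of_tendsto_of_le_of_le' tendsto_const_nhds hinv0 ?_ ?_
    · filter_upwards with t using hHnn t
    · filter_upwards [eventually_gt_atTop 0] with t ht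
      calc H t ≤ (1/t) * T t := hHle t ht
        _ ≤ (1/t) * 1 := by
            apply mul_le_mul_of_nonneg_left (hTle1 t ht) (by positivity)
        _ = 1/t := mul_one _
  have hTt0 : Tendsto (fun t => T t / t) atTop (𝓝 0) := by
    refine tendsto_of_tendsto_of_tendsto_of_le_of_le' tendsto_const_nhds hinv0 ?_ ?_
    · filter_upwards [eventually_gt_atTop 0] with t ht
      exact div_nonneg (le_of_lt (hTpos t ht)) ht.le
    · filter_upwards [eventually_gt_atTop 0] with t ht
      rw [div_le_div_iff₀ ht ht, one_mul]
      calc T t * t ≤ 1 * t := mul_le_mul_of_nonneg_right (hTle1 t ht) ht.le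
        _ = t := one_mul t
  -- GFR in terms of T
  have hr : Tendsto (fun t => t * f t / T t) atTop (𝓝 l) := by
    refine hGFR.congr' ?_
    filter_upwards [eventually_gt_atTop 0] with t ht
    rw [← hTF t ht]
  have hl1 : l + 1 ≠ 0 := by linarith
  have hrr : Tendsto (fun t => (t * f t / T t) / (t * f t / T t + 1)) atTop (𝓝 (l/(l+1))) :=
    hr.div (hr.add tendsto_const_nhds) hl1
  have hlh : Tendsto (fun t => H t / (T t / t)) atTop (𝓝 (l/(l+1))) := by
    apply HasDerivAt.lhopital_zero_atTop
      (f' := fun t => -(g t))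
      (g' := fun t => (-(f t) * t - T t * 1) / t ^ 2)
    · filter_upwards [eventually_gt_atTop 0] with t ht
      exact hHderiv t ht
    · filter_upwards [eventually_gt_atTop 0] with t ht
      exact (hTderiv t ht).div (hasDerivAt_id t) ht.ne'
    · filter_upwards [eventually_gt_atTop 0] with t ht
      have h1 : (-(f t) * t - T t * 1) < 0 := by nlinarith [hnn t, hTpos t ht]
      exact div_ne_zero (ne_of_lt h1) (by positivity)
    · exact hH0
    · exact hTt0
    · refine hrr.congr' ?_
      filter_upwards [eventually_gt_atTop 0] with t ht
      have hT := hTpos t ht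
      have hden : 0 < t * f t + T t := by nlinarith [hnn t]
      have hden' : (-(f t) * t - T t * 1) ≠ 0 := by nlinarith [hnn t]
      show (t*f t/T t)/(t*f t/T t + 1) = -(g t) / ((-(f t)*t - T t*1)/t^2)
      simp only [hgdef]
      have h2 : t * f t / T t + 1 = (t * f t + T t)/ T t := by field_simp
      rw [h2, div_div_div_cancel_right₀, div_div_eq_mul_div, div_eq_div_iff hden.ne' hden']
      · field_simp
        ring
      · exact hT.ne'
  -- split G
  have hGsplit : ∀ t : ℝ, 0 < t → Gfun f t = (1/t) * T t - H t := by
    intro t ht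
    rw [Gfun]
    have heq : ∀ γ ∈ Set.Ioi t, (1/t - 1/γ) * f γ = (1/t) * f γ - (1/γ) * f γ :=
      fun γ _ => by ring
    rw [setIntegral_congr_fun measurableSet_Ioi heq,
      integral_sub ((hintt t ht.le).const_mul _) (hintg t ht), integral_const_mul]
  have heqfin : (fun t => 1 - H t/(T t/t)) =ᶠ[atTop] (fun t => t * Gfun f t / (1 - Fcdf f t)) := by
    filter_upwards [eventually_gt_atTop 0] with t ht
    rw [← hTF t ht, hGsplit t ht]
    have hT := (hTpos t ht).ne'
    field_simp
  have hfin : Tendsto (fun t => 1 - H t/(T t/t)) atTop (𝓝 (1 - l/(l+1))) :=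
    tendsto_const_nhds.sub hlh
  have hval : 1 - l/(l+1) = 1/(1+l) := by
    field_simp
    ring
  rw [hval] at hfin
  exact hfin.congr' heqfin
end

section
/- Suppose f is continuous on (0,∞) and ∫₁^∞ log(γ) f(γ) dγ < ∞. Then for every λ > 0, I(λ) = λ·G(λ) + ∫_λ^∞ G(u) du. (Integration-by-parts form of the identity I(λ) = ∫₀^{G(λ)} G⁻¹(u) du, equations (E4B71)/(E5A02AB), which expresses the water-filling capacity as C(P̄) = ∫₀^{P̄} G⁻¹(t) dt.) -/
open MeasureTheory Filter Set Topology

/-- The water-filling rate function `I(t) = ∫_t^∞ log(γ/t) f(γ) dγ`. -/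
noncomputable def Ifun (f : ℝ → ℝ) (t : ℝ) : ℝ := ∫ γ in Set.Ioi t, Real.log (γ / t) * f γ

lemma f_meas {f : ℝ → ℝ} (hzero : ∀ x ≤ (0:ℝ), f x = 0)
    (hcont : ContinuousOn f (Set.Ioi (0:ℝ))) : Measurable f := by
  classical
  have hf : f = Set.piecewise (Set.Ioi 0) f (fun _ => 0) := by
    funext x
    by_cases hx : x ∈ Set.Ioi (0:ℝ)
    · simp [Set.piecewise, hx]
    · simp only [Set.piecewise, hx, if_false]
      exact hzero x (by simpa using hx)
  rw [hf]
  exact hcont.measurable_piecewise continuousOn_const measurableSet_Ioi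

lemma intG {f : ℝ → ℝ} (hnn : ∀ x, 0 ≤ f x) (hmeas : Measurable f)
    (hint : IntegrableOn f (Set.Ioi (0:ℝ))) {u : ℝ} (hu : 0 < u) :
    IntegrableOn (fun γ => (1/u - 1/γ) * f γ) (Set.Ioi u) := by
  have hfi : IntegrableOn (fun γ => (1/u) * f γ) (Set.Ioi u) :=
    (hint.mono_set (Set.Ioi_subset_Ioi hu.le)).const_mul _
  have hm : Measurable fun γ : ℝ => (1/u - 1/γ) * f γ := by
    apply Measurable.mul _ hmeas
    simp only [one_div]
    exact measurable_const.sub measurable_inv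
  refine Integrable.mono hfi hm.aestronglyMeasurable ?_
  refine (ae_restrict_iff' measurableSet_Ioi).2 (ae_of_all _ fun γ hγ => ?_)
  have hγ0 : 0 < γ := hu.trans hγ
  have h1 : 0 ≤ 1/u - 1/γ := by
    have := one_div_le_one_div_of_le hu (le_of_lt hγ)
    linarith
  have h2 : 1/u - 1/γ ≤ 1/u := by
    have : 0 < 1/γ := by positivity
    linarith
  rw [Real.norm_eq_abs, Real.norm_eq_abs, abs_mul, abs_mul, abs_of_nonneg h1,
    abs_of_nonneg (hnn γ), abs_of_nonneg (by positivity : (0:ℝ) ≤ 1/u)]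
  exact mul_le_mul_of_nonneg_right h2 (hnn γ)

lemma intLogf {f : ℝ → ℝ} (hnn : ∀ x, 0 ≤ f x) (hmeas : Measurable f)
    (hint : IntegrableOn f (Set.Ioi (0:ℝ)))
    (hlog : IntegrableOn (fun γ => Real.log γ * f γ) (Set.Ioi (1:ℝ)))
    {lam : ℝ} (hlam : 0 < lam) :
    IntegrableOn (fun γ => Real.log γ * f γ) (Set.Ioi lam) := by
  set M : ℝ := max lam 1 with hM
  have hlamM : lam ≤ M := le_max_left _ _
  have hsplit : Set.Ioi lam = Set.Ioc lam M ∪ Set.Ioi M := (Set.Ioc_union_Ioi_eq_Ioi hlamM).symm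
  rw [hsplit]
  refine IntegrableOn.union ?_ (hlog.mono_set (Set.Ioi_subset_Ioi (le_max_right _ _)))
  -- bounded on Ioc lam M
  set C : ℝ := max |Real.log lam| |Real.log M| with hC
  have hfi : IntegrableOn (fun γ => C * f γ) (Set.Ioc lam M) :=
    (hint.mono_set (fun x hx => lt_of_lt_of_le hlam hx.1.le)).const_mul _
  refine Integrable.mono hfi (Real.measurable_log.mul hmeas).aestronglyMeasurable ?_
  refine (ae_restrict_iff' measurableSet_Ioc).2 (ae_of_all _ fun γ hγ => ?_)
  have hγ0 : 0 < γ := hlam.trans hγ.1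
  have h1 : |Real.log γ| ≤ C := by
    rw [abs_le]
    constructor
    · have : Real.log lam ≤ Real.log γ := Real.log_le_log hlam hγ.1.le
      have h2 : -C ≤ Real.log lam := by
        have := neg_abs_le (Real.log lam)
        have : -C ≤ -|Real.log lam| := neg_le_neg (le_max_left _ _)
        linarith [neg_abs_le (Real.log lam)]
      linarith
    · have : Real.log γ ≤ Real.log M := Real.log_le_log hγ0 hγ.2
      have h2 : Real.log M ≤ C := (le_abs_self _).trans (le_max_right _ _)
      linarith
  rw [Real.norm_eq_abs, Real.norm_eq_abs, abs_mul, abs_mul, abs_of_nonneg (hnn γ)]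
  have hC0 : 0 ≤ C := le_trans (abs_nonneg _) (le_max_left _ _)
  rw [abs_of_nonneg hC0]
  exact mul_le_mul_of_nonneg_right h1 (hnn γ)

lemma g_nonneg {lam γ : ℝ} (hlam : 0 < lam) (hγ : lam < γ) :
    0 ≤ Real.log (γ/lam) - (1 - lam/γ) := by
  have hx : 0 < γ/lam := div_pos (hlam.trans hγ) hlam
  have h := Real.one_sub_inv_le_log_of_pos hx
  rw [inv_div] at h
  have : lam/γ ≤ 1 := by
    rw [div_le_one (hlam.trans hγ)]; exact hγ.le
  linarith

lemma intOneSub {f : ℝ → ℝ} (hnn : ∀ x, 0 ≤ f x) (hmeas : Measurable f)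
    (hint : IntegrableOn f (Set.Ioi (0:ℝ))) {lam : ℝ} (hlam : 0 < lam) :
    IntegrableOn (fun γ => (1 - lam/γ) * f γ) (Set.Ioi lam) := by
  refine IntegrableOn.congr_fun ((intG hnn hmeas hint hlam).const_mul lam)
    (fun γ hγ => ?_) measurableSet_Ioi
  have hγ0 : 0 < γ := hlam.trans hγ
  field_simp

lemma intLogDiv {f : ℝ → ℝ} (hnn : ∀ x, 0 ≤ f x) (hmeas : Measurable f)
    (hint : IntegrableOn f (Set.Ioi (0:ℝ)))
    (hlog : IntegrableOn (fun γ => Real.log γ * f γ) (Set.Ioi (1:ℝ)))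
    {lam : ℝ} (hlam : 0 < lam) :
    IntegrableOn (fun γ => Real.log (γ/lam) * f γ) (Set.Ioi lam) := by
  refine IntegrableOn.congr_fun ((intLogf hnn hmeas hint hlog hlam).sub
    ((hint.mono_set (Set.Ioi_subset_Ioi hlam.le)).const_mul (Real.log lam)))
      (fun γ hγ => ?_) measurableSet_Ioi
  have hγ0 : 0 < γ := hlam.trans hγ
  rw [Real.log_div hγ0.ne' hlam.ne']
  simp only [Pi.sub_apply]
  ring

lemma gf_int {f : ℝ → ℝ} (hnn : ∀ x, 0 ≤ f x) (hmeas : Measurable f)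
    (hint : IntegrableOn f (Set.Ioi (0:ℝ)))
    (hlog : IntegrableOn (fun γ => Real.log γ * f γ) (Set.Ioi (1:ℝ)))
    {lam : ℝ} (hlam : 0 < lam) :
    IntegrableOn (fun γ => (Real.log (γ/lam) - (1 - lam/γ)) * f γ) (Set.Ioi lam) := by
  refine IntegrableOn.congr_fun
    ((intLogDiv hnn hmeas hint hlog hlam).sub (intOneSub hnn hmeas hint hlam))
    (fun γ hγ => ?_) measurableSet_Ioi
  simp only [Pi.sub_apply]
  ring

lemma key {f : ℝ → ℝ} (hnn : ∀ x, 0 ≤ f x) (hmeas : Measurable f)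
    (hint : IntegrableOn f (Set.Ioi (0:ℝ)))
    (hlog : IntegrableOn (fun γ => Real.log γ * f γ) (Set.Ioi (1:ℝ)))
    {lam : ℝ} (hlam : 0 < lam) :
    IntegrableOn (Gfun f) (Set.Ioi lam) ∧
      ∫ u in Set.Ioi lam, Gfun f u
        = ∫ γ in Set.Ioi lam, (Real.log (γ/lam) - (1 - lam/γ)) * f γ := by
  classical
  set g : ℝ → ℝ := fun γ => Real.log (γ/lam) - (1 - lam/γ) with hg
  set Φ : ℝ × ℝ → ENNReal := fun p =>
    if p.1 < p.2 then ENNReal.ofReal ((1/p.1 - 1/p.2) * f p.2) else 0 with hΦ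
  have hΦm : Measurable Φ := by
    apply Measurable.ite (measurableSet_lt measurable_fst measurable_snd) _ measurable_const
    apply Measurable.ennreal_ofReal
    apply Measurable.mul _ (hmeas.comp measurable_snd)
    simp only [one_div]
    exact (measurable_fst.inv).sub (measurable_snd.inv)
  have hGnn : ∀ u ∈ Set.Ioi lam, 0 ≤ Gfun f u := by
    intro u hu
    refine setIntegral_nonneg measurableSet_Ioi fun γ hγ => mul_nonneg ?_ (hnn γ)
    have h := one_div_le_one_div_of_le (hlam.trans hu) (le_of_lt hγ)
    linarith
  have hIi : ∀ u ∈ Set.Ioi lam,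
      (∫⁻ γ in Set.Ioi lam, Φ (u, γ)) = ENNReal.ofReal (Gfun f u) := by
    intro u hu
    have hu0 : 0 < u := hlam.trans hu
    have hind : (fun γ => Φ (u, γ))
        = (Set.Ioi u).indicator (fun γ => ENNReal.ofReal ((1/u - 1/γ) * f γ)) := by
      funext γ
      by_cases h : u < γ <;> simp [hΦ, Set.indicator, h]
    rw [hind, lintegral_indicator measurableSet_Ioi, Measure.restrict_restrict measurableSet_Ioi,
        Set.Ioi_inter_Ioi, max_eq_left (le_of_lt hu)]
    have hnnae : 0 ≤ᵐ[volume.restrict (Set.Ioi u)] fun γ => (1/u - 1/γ) * f γ := by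
      refine (ae_restrict_iff' measurableSet_Ioi).2 (ae_of_all _ fun γ hγ => ?_)
      have h := one_div_le_one_div_of_le hu0 (le_of_lt hγ)
      exact mul_nonneg (by linarith) (hnn γ)
    rw [← ofReal_integral_eq_lintegral_ofReal (intG hnn hmeas hint hu0) hnnae]
    rfl
  have hJi : ∀ γ ∈ Set.Ioi lam,
      (∫⁻ u in Set.Ioi lam, Φ (u, γ)) = ENNReal.ofReal (g γ * f γ) := by
    intro γ hγ
    have hγ0 : 0 < γ := hlam.trans hγ
    have hind : (fun u => Φ (u, γ))
        = (Set.Iio γ).indicator (fun u => ENNReal.ofReal ((1/u - 1/γ) * f γ)) := by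
      funext u
      by_cases h : u < γ <;> simp [hΦ, Set.indicator, h]
    rw [hind, lintegral_indicator measurableSet_Iio, Measure.restrict_restrict measurableSet_Iio,
        Set.Iio_inter_Ioi]
    have hcont1 : ContinuousOn (fun u : ℝ => (1/u - 1/γ) * f γ) (Set.Icc lam γ) := by
      refine ContinuousOn.mul (ContinuousOn.sub ?_ continuousOn_const) continuousOn_const
      exact continuousOn_const.div continuousOn_id fun x hx => (lt_of_lt_of_le hlam hx.1).ne'
    have hintu : IntegrableOn (fun u : ℝ => (1/u - 1/γ) * f γ) (Set.Ioo lam γ) :=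
      (hcont1.integrableOn_Icc).mono_set Set.Ioo_subset_Icc_self
    have hnnu : 0 ≤ᵐ[volume.restrict (Set.Ioo lam γ)] fun u : ℝ => (1/u - 1/γ) * f γ := by
      refine (ae_restrict_iff' measurableSet_Ioo).2 (ae_of_all _ fun u hu => ?_)
      have h := one_div_le_one_div_of_le (hlam.trans hu.1) (le_of_lt hu.2)
      exact mul_nonneg (by linarith) (hnn γ)
    rw [← ofReal_integral_eq_lintegral_ofReal hintu hnnu]
    congr 1
    rw [← integral_Ioc_eq_integral_Ioo, ← intervalIntegral.integral_of_le (le_of_lt hγ),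
        intervalIntegral.integral_mul_const]
    have h0 : (0:ℝ) ∉ Set.uIcc lam γ := by
      rw [Set.uIcc_of_le (le_of_lt hγ)]
      exact fun hc => absurd hc.1 (not_le.2 hlam)
    have hii1 : IntervalIntegrable (fun u : ℝ => 1/u) volume lam γ := by
      apply ContinuousOn.intervalIntegrable
      exact continuousOn_const.div continuousOn_id fun x hx => fun hc =>
        h0 (hc ▸ hx)
    have hii2 : IntervalIntegrable (fun _ : ℝ => 1/γ) volume lam γ := intervalIntegrable_const
    rw [intervalIntegral.integral_sub hii1 hii2, integral_one_div h0,
        intervalIntegral.integral_const, smul_eq_mul]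
    have : (γ - lam) * (1/γ) = 1 - lam/γ := by field_simp
    rw [this]
  have hswap : (∫⁻ u in Set.Ioi lam, ∫⁻ γ in Set.Ioi lam, Φ (u, γ))
      = ∫⁻ γ in Set.Ioi lam, ∫⁻ u in Set.Ioi lam, Φ (u, γ) :=
    lintegral_lintegral_swap hΦm.aemeasurable
  have hL : (∫⁻ u in Set.Ioi lam, ∫⁻ γ in Set.Ioi lam, Φ (u, γ))
      = ∫⁻ u in Set.Ioi lam, ENNReal.ofReal (Gfun f u) :=
    setLIntegral_congr_fun measurableSet_Ioi hIi
  have hR : (∫⁻ γ in Set.Ioi lam, ∫⁻ u in Set.Ioi lam, Φ (u, γ))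
      = ∫⁻ γ in Set.Ioi lam, ENNReal.ofReal (g γ * f γ) :=
    setLIntegral_congr_fun measurableSet_Ioi hJi
  have hgint : IntegrableOn (fun γ => g γ * f γ) (Set.Ioi lam) :=
    gf_int hnn hmeas hint hlog hlam
  have hgnn : 0 ≤ᵐ[volume.restrict (Set.Ioi lam)] fun γ => g γ * f γ := by
    refine (ae_restrict_iff' measurableSet_Ioi).2 (ae_of_all _ fun γ hγ => ?_)
    exact mul_nonneg (g_nonneg hlam hγ) (hnn γ)
  have hRval : (∫⁻ γ in Set.Ioi lam, ENNReal.ofReal (g γ * f γ))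
      = ENNReal.ofReal (∫ γ in Set.Ioi lam, g γ * f γ) :=
    (ofReal_integral_eq_lintegral_ofReal hgint hgnn).symm
  have hmG : Measurable fun u => ∫⁻ γ in Set.Ioi lam, Φ (u, γ) :=
    Measurable.lintegral_prod_right (f := fun u γ => Φ (u, γ)) hΦm
  have hGnn_ae : 0 ≤ᵐ[volume.restrict (Set.Ioi lam)] Gfun f :=
    (ae_restrict_iff' measurableSet_Ioi).2 (ae_of_all _ hGnn)
  have hGsm : AEStronglyMeasurable (Gfun f) (volume.restrict (Set.Ioi lam)) := by
    refine (hmG.ennreal_toReal.aestronglyMeasurable).congr ?_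
    refine (ae_restrict_iff' measurableSet_Ioi).2 (ae_of_all _ fun u hu => ?_)
    show (∫⁻ γ in Set.Ioi lam, Φ (u, γ)).toReal = Gfun f u
    rw [hIi u hu, ENNReal.toReal_ofReal (hGnn u hu)]
  have hlintG : (∫⁻ u in Set.Ioi lam, ENNReal.ofReal (Gfun f u))
      = ENNReal.ofReal (∫ γ in Set.Ioi lam, g γ * f γ) := by
    rw [← hL, hswap, hR, hRval]
  have hGfin : HasFiniteIntegral (Gfun f) (volume.restrict (Set.Ioi lam)) := by
    rw [hasFiniteIntegral_iff_ofReal hGnn_ae, hlintG]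
    exact ENNReal.ofReal_lt_top
  refine ⟨⟨hGsm, hGfin⟩, ?_⟩
  rw [integral_eq_lintegral_of_nonneg_ae hGnn_ae hGsm, hlintG,
    ENNReal.toReal_ofReal (setIntegral_nonneg measurableSet_Ioi fun γ hγ =>
      mul_nonneg (g_nonneg hlam hγ) (hnn γ))]

/-- Integration-by-parts form of (E4B71)/(E5A02AB):
`I(λ) = λ·G(λ) + ∫_λ^∞ G(u) du` for every `λ > 0`. -/
theorem I_eq_lam_mul_G_add_integral_G (f : ℝ → ℝ)
    (hnn : ∀ x, 0 ≤ f x)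
    (hzero : ∀ x ≤ (0:ℝ), f x = 0)
    (hcont : ContinuousOn f (Set.Ioi (0:ℝ)))
    (hint : IntegrableOn f (Set.Ioi (0:ℝ)))
    (hone : ∫ γ in Set.Ioi (0:ℝ), f γ = 1)
    (hsupp : ∀ t > (0:ℝ), Fcdf f t < 1)
    (hlog : IntegrableOn (fun γ => Real.log γ * f γ) (Set.Ioi (1:ℝ))) :
    ∀ lam > (0:ℝ),
      Ifun f lam = lam * Gfun f lam + ∫ u in Set.Ioi lam, Gfun f u := by
  intro lam hlam
  have hmeas := f_meas hzero hcont
  obtain ⟨hGint, hkey⟩ := key hnn hmeas hint hlog hlam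
  have h1 : lam * Gfun f lam = ∫ γ in Set.Ioi lam, (1 - lam/γ) * f γ := by
    simp only [Gfun]
    rw [← integral_const_mul]
    refine setIntegral_congr_fun measurableSet_Ioi fun γ hγ => ?_
    have hγ0 : 0 < γ := hlam.trans hγ
    field_simp
  have h2 : Ifun f lam = (∫ γ in Set.Ioi lam, (1 - lam/γ) * f γ)
      + ∫ γ in Set.Ioi lam, (Real.log (γ/lam) - (1 - lam/γ)) * f γ := by
    simp only [Ifun]
    rw [← integral_add (intOneSub hnn hmeas hint hlam) (gf_int hnn hmeas hint hlog hlam)]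
    refine setIntegral_congr_fun measurableSet_Ioi fun γ hγ => ?_
    ring
  rw [h2, h1, hkey]
end

section
/- Suppose f is continuous on (0,∞), ∫₁^∞ log(γ) f(γ) dγ < ∞, and t·f(t)/(1 − F(t)) → l as t → ∞ with 0 < l < ∞. Then I(λ)/(λ·G(λ)) → 1 + 1/l as λ → ∞. In other words, the ergodic capacity with perfect transmitter and receiver channel state information satisfies C(P̄) ≈ (1 + 1/l)·λ(P̄)·P̄ at asymptotically low average power P̄, where λ(P̄) is the water level with G(λ(P̄)) = P̄. (Theorem 2, capacity formula, finite-l case.) -/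
open MeasureTheory Filter Set Topology

section helpers
lemma tail_eq (g : ℝ → ℝ) (c : ℝ) (hgi : IntegrableOn g (Set.Ioi c))
    {x : ℝ} (hx : c ≤ x) :
    (∫ γ in Set.Ioi x, g γ) = (∫ γ in Set.Ioi c, g γ) - ∫ γ in c..x, g γ := by
  have hu : Set.Ioc c x ∪ Set.Ioi x = Set.Ioi c := Set.Ioc_union_Ioi_eq_Ioi hx
  have h1 : IntegrableOn g (Set.Ioc c x) := hgi.mono_set Set.Ioc_subset_Ioi_self
  have h2 : IntegrableOn g (Set.Ioi x) := hgi.mono_set (Set.Ioi_subset_Ioi hx)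
  rw [intervalIntegral.integral_of_le hx, ← hu,
    setIntegral_union (Set.Ioc_disjoint_Ioi le_rfl) measurableSet_Ioi h1 h2]
  ring

lemma tail_tendsto_zero (g : ℝ → ℝ) (c : ℝ) (hgi : IntegrableOn g (Set.Ioi c)) :
    Tendsto (fun t => ∫ γ in Set.Ioi t, g γ) atTop (𝓝 0) := by
  have h := MeasureTheory.intervalIntegral_tendsto_integral_Ioi c hgi tendsto_id
  have : Tendsto (fun t => (∫ γ in Set.Ioi c, g γ) - ∫ γ in c..t, g γ) atTop
      (𝓝 ((∫ γ in Set.Ioi c, g γ) - ∫ γ in Set.Ioi c, g γ)) := tendsto_const_nhds.sub h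
  rw [sub_self] at this
  refine this.congr' ?_
  filter_upwards [eventually_ge_atTop c] with t ht
  exact (tail_eq g c hgi ht).symm

lemma tail_hasDeriv (g : ℝ → ℝ) (c : ℝ) (hc : 0 < c)
    (hgc : ContinuousOn g (Set.Ioi (0:ℝ))) (hgi : IntegrableOn g (Set.Ioi c))
    {x : ℝ} (hx : c < x) :
    HasDerivAt (fun t => ∫ γ in Set.Ioi t, g γ) (-g x) x := by
  have hmeas : StronglyMeasurableAtFilter g (𝓝 x) volume :=
    ⟨Set.Ioi 0, Ioi_mem_nhds (hc.trans hx),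
      (hgc.aestronglyMeasurable measurableSet_Ioi)⟩
  have hii : IntervalIntegrable g volume c x := by
    rw [intervalIntegrable_iff_integrableOn_Ioc_of_le hx.le]
    exact hgi.mono_set Set.Ioc_subset_Ioi_self
  have hca : ContinuousAt g x :=
    hgc.continuousAt (Ioi_mem_nhds (hc.trans hx))
  have h := intervalIntegral.integral_hasDerivAt_right hii hmeas hca
  have h2 : HasDerivAt (fun t => (∫ γ in Set.Ioi c, g γ) - ∫ γ in c..t, g γ) (-g x) x := by
    simpa [Pi.sub_def] using (hasDerivAt_const x _).sub h
  refine h2.congr_of_eventuallyEq ?_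
  filter_upwards [eventually_gt_nhds hx] with t ht
  exact tail_eq g c hgi ht.le
end helpers

/-- Theorem 2 (capacity formula, finite-`l` case): if the generalized failure rate
tends to `l ∈ (0,∞)`, then `I(λ)/(λ·G(λ)) → 1 + 1/l` as `λ → ∞`, i.e. the ergodic
capacity satisfies `C(P̄) ≈ (1 + 1/l)·λ(P̄)·P̄` at asymptotically low power. -/
theorem capacity_asymptotics_GFR_finite (f : ℝ → ℝ) (l : ℝ)
    (hnn : ∀ x, 0 ≤ f x)
    (hzero : ∀ x ≤ (0:ℝ), f x = 0)
    (hcont : ContinuousOn f (Set.Ioi (0:ℝ)))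
    (hint : IntegrableOn f (Set.Ioi (0:ℝ)))
    (hone : ∫ γ in Set.Ioi (0:ℝ), f γ = 1)
    (hsupp : ∀ t > (0:ℝ), Fcdf f t < 1)
    (hlog : IntegrableOn (fun γ => Real.log γ * f γ) (Set.Ioi (1:ℝ)))
    (hl : 0 < l)
    (hGFR : Tendsto (fun t => t * f t / (1 - Fcdf f t)) atTop (nhds l)) :
    Tendsto (fun lam => Ifun f lam / (lam * Gfun f lam)) atTop (nhds (1 + 1 / l)) := by
  set T : ℝ → ℝ := fun t => ∫ γ in Set.Ioi t, f γ with hTdef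
  set J : ℝ → ℝ := fun t => ∫ γ in Set.Ioi t, Real.log γ * f γ with hJdef
  set K : ℝ → ℝ := fun t => ∫ γ in Set.Ioi t, f γ / γ with hKdef
  -- basic integrabilities
  have hTi : IntegrableOn f (Set.Ioi (1:ℝ)) := hint.mono_set (Set.Ioi_subset_Ioi zero_le_one)
  have hKi : IntegrableOn (fun γ => f γ / γ) (Set.Ioi (1:ℝ)) := by
    have hmeas : AEStronglyMeasurable (fun γ => f γ / γ) (volume.restrict (Set.Ioi (1:ℝ))) := by
      have hid : AEStronglyMeasurable (fun γ : ℝ => γ⁻¹) (volume.restrict (Set.Ioi (1:ℝ))) :=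
        (measurable_inv.comp measurable_id).aestronglyMeasurable
      simpa [div_eq_mul_inv, Pi.mul_def] using hTi.aestronglyMeasurable.mul hid
    refine Integrable.mono hTi hmeas ?_
    filter_upwards [ae_restrict_mem measurableSet_Ioi] with γ hγ
    have h1 : (1:ℝ) ≤ γ := le_of_lt hγ
    rw [Real.norm_eq_abs, Real.norm_eq_abs, abs_of_nonneg (hnn γ),
      abs_of_nonneg (div_nonneg (hnn γ) (zero_le_one.trans h1))]
    calc f γ / γ ≤ f γ / 1 := by gcongr; exact hnn γ
      _ = f γ := div_one _
  -- T = 1 - F and positivity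
  have hTF : ∀ t > (0:ℝ), T t = 1 - Fcdf f t := by
    intro t ht
    have := tail_eq f 0 hint ht.le
    rw [hTdef]
    simp only [Fcdf] at *
    rw [this, hone]
  have hTpos : ∀ t > (0:ℝ), 0 < T t := by
    intro t ht
    rw [hTF t ht]
    linarith [hsupp t ht]
  -- continuity of integrands
  have hcontlog : ContinuousOn (fun γ => Real.log γ * f γ) (Set.Ioi (0:ℝ)) :=
    (Real.continuousOn_log.mono (fun x hx => ne_of_gt hx)).mul hcont
  have hcontdiv : ContinuousOn (fun γ => f γ / γ) (Set.Ioi (0:ℝ)) :=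
    hcont.div continuousOn_id (fun x hx => ne_of_gt hx)
  -- derivatives of tails
  have hT' : ∀ x, 1 < x → HasDerivAt T (-f x) x :=
    fun x hx => tail_hasDeriv f 1 one_pos hcont hTi hx
  have hJ' : ∀ x, 1 < x → HasDerivAt J (-(Real.log x * f x)) x :=
    fun x hx => tail_hasDeriv _ 1 one_pos hcontlog hlog hx
  have hK' : ∀ x, 1 < x → HasDerivAt K (-(f x / x)) x :=
    fun x hx => tail_hasDeriv _ 1 one_pos hcontdiv hKi hx
  -- identities for Ifun and Gfun
  have hIeq : ∀ x, 1 < x → Ifun f x = J x - Real.log x * T x := by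
    intro x hx
    have hxpos : (0:ℝ) < x := lt_trans one_pos hx
    have h1 : IntegrableOn (fun γ => Real.log γ * f γ) (Set.Ioi x) :=
      hlog.mono_set (Set.Ioi_subset_Ioi hx.le)
    have h2 : IntegrableOn (fun γ => Real.log x * f γ) (Set.Ioi x) :=
      ((hint.mono_set (Set.Ioi_subset_Ioi hxpos.le))).const_mul _
    have hcg : ∀ γ ∈ Set.Ioi x, Real.log (γ / x) * f γ
        = Real.log γ * f γ - Real.log x * f γ := by
      intro γ hγ
      rw [Real.log_div (ne_of_gt (lt_trans hxpos hγ)) (ne_of_gt hxpos)]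
      ring
    rw [Ifun, setIntegral_congr_fun measurableSet_Ioi hcg, integral_sub h1 h2,
      integral_const_mul]
  have hGeq : ∀ x, 1 < x → Gfun f x = T x / x - K x := by
    intro x hx
    have hxpos : (0:ℝ) < x := lt_trans one_pos hx
    have h1 : IntegrableOn (fun γ => (1/x) * f γ) (Set.Ioi x) :=
      ((hint.mono_set (Set.Ioi_subset_Ioi hxpos.le))).const_mul _
    have h2 : IntegrableOn (fun γ => f γ / γ) (Set.Ioi x) :=
      hKi.mono_set (Set.Ioi_subset_Ioi hx.le)
    have hcg : ∀ γ ∈ Set.Ioi x, (1/x - 1/γ) * f γ = (1/x) * f γ - f γ / γ := by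
      intro γ hγ
      have hγpos : (0:ℝ) < γ := lt_trans hxpos hγ
      field_simp
    rw [Gfun, setIntegral_congr_fun measurableSet_Ioi hcg, integral_sub h1 h2,
      integral_const_mul, one_div, inv_mul_eq_div]
  -- derivatives of Ifun and Gfun
  have hI' : ∀ x, 1 < x → HasDerivAt (Ifun f) (-(T x) / x) x := by
    intro x hx
    have hxpos : (0:ℝ) < x := lt_trans one_pos hx
    have hd : HasDerivAt (fun t => J t - Real.log t * T t)
        (-(Real.log x * f x) - (x⁻¹ * T x + Real.log x * (-f x))) x :=
      (hJ' x hx).sub ((Real.hasDerivAt_log (ne_of_gt hxpos)).mul (hT' x hx))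
    have heq : Ifun f =ᶠ[nhds x] (fun t => J t - Real.log t * T t) := by
      filter_upwards [eventually_gt_nhds hx] with t ht
      exact hIeq t ht
    have := hd.congr_of_eventuallyEq heq
    refine this.congr_deriv ?_
    ring
  have hG' : ∀ x, 1 < x → HasDerivAt (Gfun f) (-(T x) / x ^ 2) x := by
    intro x hx
    have hxpos : (0:ℝ) < x := lt_trans one_pos hx
    have hd : HasDerivAt (fun t => T t / t - K t)
        ((-f x * x - T x * 1) / x ^ 2 - -(f x / x)) x :=
      ((hT' x hx).div (hasDerivAt_id x) (ne_of_gt hxpos)).sub (hK' x hx)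
    have heq : Gfun f =ᶠ[nhds x] (fun t => T t / t - K t) := by
      filter_upwards [eventually_gt_nhds hx] with t ht
      exact hGeq t ht
    have := hd.congr_of_eventuallyEq heq
    refine this.congr_deriv ?_
    have hx0 : x ≠ 0 := ne_of_gt hxpos
    field_simp
    ring
  -- limits of tails
  have hT0 : Tendsto T atTop (nhds 0) := tail_tendsto_zero f 1 hTi
  have hJ0 : Tendsto J atTop (nhds 0) := tail_tendsto_zero _ 1 hlog
  have hK0 : Tendsto K atTop (nhds 0) := tail_tendsto_zero _ 1 hKi
  have hToverX : Tendsto (fun x => T x / x) atTop (nhds 0) :=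
    hT0.div_atTop tendsto_id
  have hG0 : Tendsto (Gfun f) atTop (nhds 0) := by
    have : Tendsto (fun x => T x / x - K x) atTop (nhds (0 - 0)) := hToverX.sub hK0
    rw [sub_zero] at this
    refine this.congr' ?_
    filter_upwards [eventually_gt_atTop 1] with x hx
    exact (hGeq x hx).symm
  have hI0 : Tendsto (Ifun f) atTop (nhds 0) := by
    refine tendsto_of_tendsto_of_tendsto_of_le_of_le' tendsto_const_nhds hJ0 ?_ ?_
    · filter_upwards [eventually_gt_atTop 1] with x hx
      refine setIntegral_nonneg measurableSet_Ioi (fun γ hγ => ?_)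
      have hxpos : (0:ℝ) < x := lt_trans one_pos hx
      exact mul_nonneg (Real.log_nonneg ((one_le_div hxpos).mpr (le_of_lt hγ))) (hnn γ)
    · filter_upwards [eventually_gt_atTop 1] with x hx
      rw [hIeq x hx]
      have h1 : 0 ≤ Real.log x := Real.log_nonneg hx.le
      have h2 : 0 ≤ T x := (hTpos x (lt_trans one_pos hx)).le
      nlinarith
  -- GFR in terms of T
  have hGFR' : Tendsto (fun x => x * f x / T x) atTop (nhds l) := by
    refine hGFR.congr' ?_
    filter_upwards [eventually_gt_atTop 0] with x hx
    rw [hTF x hx]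
  have hfne : ∀ᶠ x in atTop, f x ≠ 0 := by
    have h := hGFR'.eventually (eventually_gt_nhds (half_lt_self hl))
    filter_upwards [h] with x hx hfx
    rw [hfx, mul_zero, zero_div] at hx
    linarith
  -- Step A : G / (T/x) → (1+l)⁻¹
  have stepA : Tendsto (fun x => Gfun f x / (T x / x)) atTop (nhds (1 + l)⁻¹) := by
    refine HasDerivAt.lhopital_zero_atTop
      (f' := fun x => -(T x) / x ^ 2) (g' := fun x => (-f x * x - T x * 1) / x ^ 2)
      ?_ ?_ ?_ hG0 hToverX ?_
    · filter_upwards [eventually_gt_atTop 1] with x hx; exact hG' x hx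
    · filter_upwards [eventually_gt_atTop 1] with x hx
      exact (hT' x hx).div (hasDerivAt_id x) (ne_of_gt (lt_trans one_pos hx))
    · filter_upwards [eventually_gt_atTop 1] with x hx
      have hxpos : (0:ℝ) < x := lt_trans one_pos hx
      have hnum : -f x * x - T x * 1 < 0 := by
        nlinarith [hnn x, hTpos x hxpos]
      exact div_ne_zero (ne_of_lt hnum) (by positivity)
    · have target : Tendsto (fun x => (1 + x * f x / T x)⁻¹) atTop (nhds (1 + l)⁻¹) :=
        (tendsto_const_nhds.add hGFR').inv₀ (by positivity)
      refine target.congr' ?_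
      filter_upwards [eventually_gt_atTop 1] with x hx
      have hxpos : (0:ℝ) < x := lt_trans one_pos hx
      have hTx : T x ≠ 0 := ne_of_gt (hTpos x hxpos)
      have hden : f x * x + T x ≠ 0 := by nlinarith [hnn x, hTpos x hxpos]
      have hx0 : x ≠ 0 := ne_of_gt hxpos
      have e1 : (1 + x * f x / T x)⁻¹ = T x / (T x + x * f x) := by
        rw [inv_eq_one_div]
        rw [show (1 : ℝ) + x * f x / T x = (T x + x * f x) / T x by field_simp]
        rw [one_div_div]
      have e2 : -(T x) / x ^ 2 / ((-f x * x - T x * 1) / x ^ 2)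
          = T x / (T x + x * f x) := by
        rw [div_div_div_cancel_right₀ (pow_ne_zero 2 hx0)]
        rw [show -f x * x - T x * 1 = -(T x + x * f x) by ring, div_neg, neg_div,
          neg_neg]
      rw [e1, e2]
  -- Step B : I / T → l⁻¹
  have stepB : Tendsto (fun x => Ifun f x / T x) atTop (nhds l⁻¹) := by
    refine HasDerivAt.lhopital_zero_atTop
      (f' := fun x => -(T x) / x) (g' := fun x => -f x) ?_ ?_ ?_ hI0 hT0 ?_
    · filter_upwards [eventually_gt_atTop 1] with x hx; exact hI' x hx
    · filter_upwards [eventually_gt_atTop 1] with x hx; exact hT' x hx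
    · filter_upwards [hfne] with x hx
      simpa using hx
    · have target : Tendsto (fun x => (x * f x / T x)⁻¹) atTop (nhds l⁻¹) :=
        hGFR'.inv₀ (ne_of_gt hl)
      refine target.congr' ?_
      filter_upwards [eventually_gt_atTop 1, hfne] with x hx hfx
      have hxpos : (0:ℝ) < x := lt_trans one_pos hx
      have hTx : T x ≠ 0 := ne_of_gt (hTpos x hxpos)
      have hx0 : x ≠ 0 := ne_of_gt hxpos
      field_simp
  -- combine
  have stepA' : Tendsto (fun x => (T x / x) / Gfun f x) atTop (nhds ((1 + l)⁻¹)⁻¹) := by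
    have := stepA.inv₀ (inv_ne_zero (by positivity))
    simpa [inv_div] using this
  have final : Tendsto (fun x => (Ifun f x / T x) * ((T x / x) / Gfun f x)) atTop
      (nhds (l⁻¹ * ((1 + l)⁻¹)⁻¹)) := stepB.mul stepA'
  have hval : (1:ℝ) + 1 / l = l⁻¹ * ((1 + l)⁻¹)⁻¹ := by
    rw [inv_inv]
    field_simp
    ring
  rw [hval]
  refine final.congr' ?_
  filter_upwards [eventually_gt_atTop 1] with x hx
  have hxpos : (0:ℝ) < x := lt_trans one_pos hx
  have hTx : T x ≠ 0 := ne_of_gt (hTpos x hxpos)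
  have hx0 : x ≠ 0 := ne_of_gt hxpos
  rcases eq_or_ne (Gfun f x) 0 with hG | hG
  · simp [hG]
  · field_simp
end

section
/- Suppose f is continuous on (0,∞), ∫₀^∞ γ f(γ) dγ < ∞, ∫₁^∞ log(γ) f(γ) dγ < ∞, and t·f(t)/(1 − F(t)) → ∞ as t → ∞. For each λ > 0 consider the on-off scheme that transmits with constant power Q(λ) = G(λ)/(1 − F(λ)) whenever the channel gain exceeds λ, achieving rate R(λ) = ∫_λ^∞ log(1 + γ·Q(λ)) f(γ) dγ. Then R(λ)/(λ·G(λ)) → 1 as λ → ∞; i.e. the on-off signaling of (E4B12) is asymptotically capacity-achieving. (Theorem 2, achievability part, l = ∞ case.) -/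
open MeasureTheory Filter Set Topology

namespace OnOffAux

noncomputable def Fbar (f : ℝ → ℝ) (t : ℝ) : ℝ := ∫ γ in Set.Ioi t, f γ
noncomputable def Mtail (f : ℝ → ℝ) (t : ℝ) : ℝ := ∫ γ in Set.Ioi t, γ * f γ
noncomputable def Htail (f : ℝ → ℝ) (t : ℝ) : ℝ := ∫ γ in Set.Ioi t, (γ - t) * f γ

variable {f : ℝ → ℝ}

lemma integral_Ioi_split {g : ℝ → ℝ} {a b : ℝ} (hg : IntegrableOn g (Set.Ioi a))
    (hab : a ≤ b) :
    ∫ x in Set.Ioi a, g x = (∫ x in Set.Ioc a b, g x) + ∫ x in Set.Ioi b, g x := by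
  rw [← setIntegral_union (Set.Ioc_disjoint_Ioi le_rfl) measurableSet_Ioi
      (hg.mono_set Set.Ioc_subset_Ioi_self) (hg.mono_set (Set.Ioi_subset_Ioi hab)),
    Set.Ioc_union_Ioi_eq_Ioi hab]

lemma fbar_eq (hint : IntegrableOn f (Set.Ioi 0)) (hone : ∫ γ in Set.Ioi (0:ℝ), f γ = 1)
    {t : ℝ} (ht : 0 ≤ t) : Fbar f t = 1 - Fcdf f t := by
  have h := integral_Ioi_split hint ht
  rw [hone] at h
  rw [Fcdf, intervalIntegral.integral_of_le ht]
  unfold Fbar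
  linarith

lemma fbar_pos (hint : IntegrableOn f (Set.Ioi 0)) (hone : ∫ γ in Set.Ioi (0:ℝ), f γ = 1)
    (hsupp : ∀ t > (0:ℝ), Fcdf f t < 1) {t : ℝ} (ht : 0 < t) : 0 < Fbar f t := by
  rw [fbar_eq hint hone ht.le]
  linarith [hsupp t ht]

lemma fbar_nonneg (hnn : ∀ x, 0 ≤ f x) (t : ℝ) : 0 ≤ Fbar f t :=
  setIntegral_nonneg measurableSet_Ioi fun x _ => hnn x

lemma htail_nonneg (hnn : ∀ x, 0 ≤ f x) (t : ℝ) : 0 ≤ Htail f t :=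
  setIntegral_nonneg measurableSet_Ioi fun x hx =>
    mul_nonneg (by linarith [Set.mem_Ioi.1 hx]) (hnn x)

lemma tail_sub {g : ℝ → ℝ} (hg : IntegrableOn g (Set.Ioi 0)) {t : ℝ} (ht : 0 < t) :
    ∫ x in Set.Ioi t, g x = (∫ x in Set.Ioi 1, g x) - ∫ x in (1:ℝ)..t, g x := by
  rcases le_total 1 t with h | h
  · rw [intervalIntegral.integral_of_le h,
      integral_Ioi_split (hg.mono_set (Set.Ioi_subset_Ioi zero_le_one)) h]
    ring
  · rw [intervalIntegral.integral_symm, intervalIntegral.integral_of_le h,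
      integral_Ioi_split (hg.mono_set (Set.Ioi_subset_Ioi ht.le)) h]
    ring

lemma tail_hasDerivAt {g : ℝ → ℝ} (hg : IntegrableOn g (Set.Ioi 0))
    (hgc : ContinuousOn g (Set.Ioi 0)) {t : ℝ} (ht : 0 < t) :
    HasDerivAt (fun s => ∫ x in Set.Ioi s, g x) (-(g t)) t := by
  have hii : IntervalIntegrable g volume 1 t :=
    intervalIntegrable_iff.2 (hg.mono_set fun x hx => lt_trans (lt_min one_pos ht) hx.1)
  have hFTC : HasDerivAt (fun u => ∫ x in (1:ℝ)..u, g x) (g t) t :=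
    intervalIntegral.integral_hasDerivAt_right hii
      (hgc.stronglyMeasurableAtFilter isOpen_Ioi t ht)
      (hgc.continuousAt (Ioi_mem_nhds ht))
  have h1 : HasDerivAt (fun s => (∫ x in Set.Ioi 1, g x) - ∫ x in (1:ℝ)..s, g x) (-(g t)) t := by
    exact hFTC.const_sub _
  refine h1.congr_of_eventuallyEq ?_
  filter_upwards [Ioi_mem_nhds ht] with s hs
  exact tail_sub hg hs

lemma fbar_hasDeriv (hint : IntegrableOn f (Set.Ioi 0)) (hcont : ContinuousOn f (Set.Ioi 0))
    {t : ℝ} (ht : 0 < t) : HasDerivAt (Fbar f) (-(f t)) t :=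
  tail_hasDerivAt hint hcont ht

lemma mtail_hasDeriv (hmean : IntegrableOn (fun γ => γ * f γ) (Set.Ioi 0))
    (hcont : ContinuousOn f (Set.Ioi 0)) {t : ℝ} (ht : 0 < t) :
    HasDerivAt (Mtail f) (-(t * f t)) t :=
  tail_hasDerivAt hmean (continuousOn_id.mul hcont) ht

lemma htail_eq (hint : IntegrableOn f (Set.Ioi 0))
    (hmean : IntegrableOn (fun γ => γ * f γ) (Set.Ioi 0)) {lam : ℝ} (h : 0 < lam) :
    Htail f lam = Mtail f lam - lam * Fbar f lam := by
  have h1 : IntegrableOn (fun γ => γ * f γ) (Set.Ioi lam) :=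
    hmean.mono_set (Set.Ioi_subset_Ioi h.le)
  have h2 : IntegrableOn (fun γ => lam * f γ) (Set.Ioi lam) :=
    (hint.mono_set (Set.Ioi_subset_Ioi h.le)).const_mul lam
  have h3 : Htail f lam = ∫ γ in Set.Ioi lam, (γ * f γ - lam * f γ) := by
    unfold Htail; congr 1; ext γ; ring
  rw [h3, integral_sub h1 h2, integral_const_mul]
  rfl

lemma htail_hasDeriv (hint : IntegrableOn f (Set.Ioi 0))
    (hcont : ContinuousOn f (Set.Ioi 0))
    (hmean : IntegrableOn (fun γ => γ * f γ) (Set.Ioi 0)) {t : ℝ} (ht : 0 < t) :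
    HasDerivAt (Htail f) (-(Fbar f t)) t := by
  have h2 : HasDerivAt (fun s => Mtail f s - s * Fbar f s)
      (-(t * f t) - (1 * Fbar f t + t * -(f t))) t :=
    (mtail_hasDeriv hmean hcont ht).sub ((hasDerivAt_id t).mul (fbar_hasDeriv hint hcont ht))
  have h3 : -(t * f t) - (1 * Fbar f t + t * -(f t)) = -(Fbar f t) := by ring
  rw [h3] at h2
  refine h2.congr_of_eventuallyEq ?_
  filter_upwards [Ioi_mem_nhds ht] with s hs
  exact htail_eq hint hmean hs

lemma htail_int (hint : IntegrableOn f (Set.Ioi 0))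
    (hmean : IntegrableOn (fun γ => γ * f γ) (Set.Ioi 0)) {t : ℝ} (ht : 0 < t) :
    IntegrableOn (fun γ => (γ - t) * f γ) (Set.Ioi t) := by
  have h := (hmean.mono_set (Set.Ioi_subset_Ioi ht.le)).sub
    ((hint.mono_set (Set.Ioi_subset_Ioi ht.le)).const_mul t)
  exact h.congr (Filter.Eventually.of_forall fun γ => by simp [Pi.sub_apply]; ring)

lemma tail_pow (hint : IntegrableOn f (Set.Ioi 0)) (hcont : ContinuousOn f (Set.Ioi 0))
    {c : ℕ} (hc1 : 1 ≤ c) {l0 : ℝ} (h0 : 0 < l0)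
    (hgfr : ∀ t, l0 ≤ t → (c : ℝ) * Fbar f t ≤ t * f t) :
    ∀ ⦃lam γ : ℝ⦄, l0 ≤ lam → lam ≤ γ → Fbar f γ * γ ^ c ≤ Fbar f lam * lam ^ c := by
  have anti : AntitoneOn (fun t => Fbar f t * t ^ c) (Set.Ici l0) := by
    apply antitoneOn_of_hasDerivWithinAt_nonpos (convex_Ici l0)
      (f' := fun t => -(f t) * t ^ c + Fbar f t * (c * t ^ (c - 1)))
    · intro x hx
      exact ((fbar_hasDeriv hint hcont (lt_of_lt_of_le h0 hx)).mul
        (hasDerivAt_pow c x)).continuousAt.continuousWithinAt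
    · intro x hx
      rw [interior_Ici] at hx
      exact (((fbar_hasDeriv hint hcont (lt_of_lt_of_le h0 hx.le)).mul
        (hasDerivAt_pow c x))).hasDerivWithinAt
    · intro x hx
      rw [interior_Ici] at hx
      have hx0 : (0:ℝ) < x := lt_of_lt_of_le h0 (le_of_lt hx)
      have hcx : (c : ℝ) * Fbar f x ≤ x * f x := hgfr x (le_of_lt hx)
      have h1 : x ^ (c - 1) * ((c : ℝ) * Fbar f x) ≤ x ^ (c - 1) * (x * f x) :=
        mul_le_mul_of_nonneg_left hcx (pow_nonneg hx0.le _)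
      have e : x ^ c = x ^ (c - 1) * x := by
        rw [← pow_succ]; congr 1; omega
      rw [e]
      nlinarith [h1]
  intro lam γ hl hg
  exact anti (Set.mem_Ici.2 hl) (Set.mem_Ici.2 (le_trans hl hg)) hg

lemma mtail_to_zero (hmean : IntegrableOn (fun γ => γ * f γ) (Set.Ioi 0)) :
    Tendsto (Mtail f) atTop (𝓝 0) := by
  have h1 : Tendsto (fun T => ∫ γ in (0:ℝ)..T, γ * f γ) atTop
      (𝓝 (∫ γ in Set.Ioi (0:ℝ), γ * f γ)) :=
    intervalIntegral_tendsto_integral_Ioi 0 hmean tendsto_id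
  have h2 : Tendsto (fun T => (∫ γ in Set.Ioi (0:ℝ), γ * f γ)
      - ∫ γ in (0:ℝ)..T, γ * f γ) atTop (𝓝 0) := by
    simpa using (tendsto_const_nhds (x := ∫ γ in Set.Ioi (0:ℝ), γ * f γ)).sub h1
  refine h2.congr' ?_
  filter_upwards [eventually_ge_atTop (0:ℝ)] with T hT
  rw [intervalIntegral.integral_of_le hT]
  have := integral_Ioi_split hmean hT
  unfold Mtail
  linarith

lemma htail_to_zero (hnn : ∀ x, 0 ≤ f x) (hint : IntegrableOn f (Set.Ioi 0))
    (hmean : IntegrableOn (fun γ => γ * f γ) (Set.Ioi 0)) :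
    Tendsto (Htail f) atTop (𝓝 0) := by
  refine tendsto_of_tendsto_of_tendsto_of_le_of_le' tendsto_const_nhds
    (mtail_to_zero hmean) ?_ ?_
  · filter_upwards with T
    exact setIntegral_nonneg measurableSet_Ioi fun x hx =>
      mul_nonneg (by linarith [Set.mem_Ioi.1 hx]) (hnn x)
  · filter_upwards [eventually_gt_atTop (0:ℝ)] with T hT
    exact setIntegral_mono_on (htail_int hint hmean hT)
      (hmean.mono_set (Set.Ioi_subset_Ioi hT.le)) measurableSet_Ioi
      (fun γ hγ => mul_le_mul_of_nonneg_right (by linarith) (hnn γ))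

lemma htail_le (hnn : ∀ x, 0 ≤ f x) (hint : IntegrableOn f (Set.Ioi 0))
    (hcont : ContinuousOn f (Set.Ioi 0))
    (hmean : IntegrableOn (fun γ => γ * f γ) (Set.Ioi 0))
    {c : ℕ} (hc : 2 ≤ c) {l0 : ℝ} (h0 : 0 < l0)
    (hgfr : ∀ t, l0 ≤ t → (c : ℝ) * Fbar f t ≤ t * f t)
    {lam : ℝ} (hl : l0 ≤ lam) :
    Htail f lam ≤ lam * Fbar f lam / ((c : ℝ) - 1) := by
  have hlam : 0 < lam := lt_of_lt_of_le h0 hl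
  have hcR : (1:ℝ) < (c:ℝ) := by exact_mod_cast lt_of_lt_of_le one_lt_two hc
  have key : ∀ T, lam ≤ T → Htail f lam ≤ Htail f T + lam * Fbar f lam / ((c:ℝ) - 1) := by
    intro T hT
    have huIcc : Set.uIcc lam T = Set.Icc lam T := Set.uIcc_of_le hT
    have hpos : ∀ s ∈ Set.Icc lam T, 0 < s := fun s hs => lt_of_lt_of_le hlam hs.1
    have hderiv : ∀ s ∈ Set.uIcc lam T, HasDerivAt (Htail f) (-(Fbar f s)) s := by
      intro s hs; rw [huIcc] at hs; exact htail_hasDeriv hint hcont hmean (hpos s hs)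
    have hFbarCont : ContinuousOn (Fbar f) (Set.uIcc lam T) := by
      intro s hs; rw [huIcc] at hs
      exact ((fbar_hasDeriv hint hcont (hpos s hs)).continuousAt).continuousWithinAt
    have hFTC := intervalIntegral.integral_eq_sub_of_hasDerivAt hderiv
      (hFbarCont.neg.intervalIntegrable)
    have hneg : ∫ s in lam..T, -(Fbar f s) = - ∫ s in lam..T, Fbar f s :=
      intervalIntegral.integral_neg
    have hI : Htail f lam = Htail f T + ∫ s in lam..T, Fbar f s := by
      rw [hneg] at hFTC; linarith
    have h0mem : (0:ℝ) ∉ Set.uIcc lam T := by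
      rw [huIcc]; intro h; exact absurd (hpos 0 h) (lt_irrefl 0)
    have hmono : (∫ s in lam..T, Fbar f s)
        ≤ ∫ s in lam..T, (Fbar f lam * lam ^ c) * s ^ (-(c:ℤ)) := by
      apply intervalIntegral.integral_mono_on hT hFbarCont.intervalIntegrable
        ((intervalIntegral.intervalIntegrable_zpow (Or.inr h0mem)).const_mul _)
      intro s hs
      have hs0 : 0 < s := hpos s hs
      have hp := tail_pow hint hcont (by omega) h0 hgfr hl hs.1
      have : Fbar f s ≤ Fbar f lam * lam ^ c / s ^ c :=
        (le_div_iff₀ (pow_pos hs0 c)).2 hp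
      simpa [zpow_neg, zpow_natCast, div_eq_mul_inv] using this
    set m : ℤ := -(c:ℤ) + 1 with hm
    have hcalc : ∫ s in lam..T, (Fbar f lam * lam ^ c) * s ^ (-(c:ℤ))
        = (Fbar f lam * lam ^ c) * ((T ^ m - lam ^ m) / ((m:ℝ))) := by
      rw [intervalIntegral.integral_const_mul,
        integral_zpow (Or.inr ⟨by omega, h0mem⟩)]
      push_cast [hm]; ring
    have hmR : ((m:ℤ):ℝ) = 1 - (c:ℝ) := by push_cast [hm]; ring
    have hTm : (0:ℝ) < T ^ m := zpow_pos (lt_of_lt_of_le hlam hT) m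
    have hlm : (0:ℝ) < lam ^ m := zpow_pos hlam m
    have h5 : (T ^ m - lam ^ m) / ((m:ℝ)) = (lam ^ m - T ^ m) / ((c:ℝ) - 1) := by
      rw [hmR, div_eq_div_iff (by linarith) (by linarith)]; ring
    have hA : 0 ≤ Fbar f lam * lam ^ c :=
      mul_nonneg (fbar_nonneg hnn lam) (pow_nonneg hlam.le c)
    have h6 : Fbar f lam * lam ^ c * lam ^ m = Fbar f lam * lam := by
      rw [mul_assoc, ← zpow_natCast lam c, ← zpow_add₀ (ne_of_gt hlam)]
      norm_num [hm]
    have h7 : (Fbar f lam * lam ^ c) * ((lam ^ m - T ^ m) / ((c:ℝ) - 1))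
        ≤ lam * Fbar f lam / ((c:ℝ) - 1) := by
      calc (Fbar f lam * lam ^ c) * ((lam ^ m - T ^ m) / ((c:ℝ) - 1))
          ≤ (Fbar f lam * lam ^ c) * (lam ^ m / ((c:ℝ) - 1)) := by
            apply mul_le_mul_of_nonneg_left _ hA
            apply div_le_div_of_nonneg_right (by linarith) (by linarith)
        _ = lam * Fbar f lam / ((c:ℝ) - 1) := by rw [← mul_div_assoc, h6]; ring
    calc Htail f lam = Htail f T + ∫ s in lam..T, Fbar f s := hI
      _ ≤ Htail f T + (Fbar f lam * lam ^ c) * ((T ^ m - lam ^ m) / ((m:ℝ))) := by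
          rw [← hcalc]; linarith [hmono]
      _ = Htail f T + (Fbar f lam * lam ^ c) * ((lam ^ m - T ^ m) / ((c:ℝ) - 1)) := by rw [h5]
      _ ≤ Htail f T + lam * Fbar f lam / ((c:ℝ) - 1) := by linarith [h7]
  have hev : ∀ᶠ T in atTop, Htail f lam - lam * Fbar f lam / ((c:ℝ) - 1) ≤ Htail f T := by
    filter_upwards [eventually_ge_atTop lam] with T hT
    linarith [key T hT]
  have hfin := ge_of_tendsto (htail_to_zero hnn hint hmean) hev
  linarith
lemma gint (hnn : ∀ x, 0 ≤ f x) (hcont : ContinuousOn f (Set.Ioi 0))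
    (hint : IntegrableOn f (Set.Ioi 0)) {lam : ℝ} (hlam : 0 < lam) :
    IntegrableOn (fun γ => (1 - lam/γ) * f γ) (Set.Ioi lam) := by
  have hsub : Set.Ioi lam ⊆ Set.Ioi 0 := Set.Ioi_subset_Ioi hlam.le
  have hmeas : AEStronglyMeasurable (fun γ => (1 - lam/γ) * f γ)
      (volume.restrict (Set.Ioi lam)) := by
    apply ContinuousOn.aestronglyMeasurable _ measurableSet_Ioi
    exact (continuousOn_const.sub (continuousOn_const.div continuousOn_id
      (fun γ hγ => ne_of_gt (lt_trans hlam hγ)))).mul (hcont.mono hsub)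
  refine Integrable.mono (hint.mono_set hsub) hmeas ?_
  filter_upwards [ae_restrict_mem measurableSet_Ioi] with γ hγ
  have hγ0 : 0 < γ := lt_trans hlam hγ
  have h1 : 0 ≤ lam / γ := div_nonneg hlam.le hγ0.le
  have h2 : lam / γ ≤ 1 := (div_le_one hγ0).2 (le_of_lt hγ)
  rw [Real.norm_eq_abs, Real.norm_eq_abs, abs_mul, abs_of_nonneg (hnn γ)]
  have : |1 - lam/γ| ≤ 1 := by rw [abs_le]; constructor <;> linarith
  nlinarith [abs_nonneg (1 - lam/γ), hnn γ, abs_of_nonneg (hnn γ)]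

lemma lamG_eq {lam : ℝ} (hlam : 0 < lam) :
    lam * Gfun f lam = ∫ γ in Set.Ioi lam, (1 - lam/γ) * f γ := by
  rw [Gfun, ← integral_const_mul]
  apply setIntegral_congr_fun measurableSet_Ioi
  intro γ hγ
  have hγ0 : (0:ℝ) < γ := lt_trans hlam hγ
  field_simp

lemma lamG_pos (hnn : ∀ x, 0 ≤ f x) (hcont : ContinuousOn f (Set.Ioi 0))
    (hint : IntegrableOn f (Set.Ioi 0)) (hFpos : ∀ t, 0 < t → 0 < Fbar f t)
    {lam : ℝ} (hlam : 0 < lam) : 0 < lam * Gfun f lam := by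
  rw [lamG_eq hlam]
  have h1 : (∫ γ in Set.Ioi (2*lam), (1 - lam/γ) * f γ)
      ≤ ∫ γ in Set.Ioi lam, (1 - lam/γ) * f γ := by
    apply setIntegral_mono_set (gint hnn hcont hint hlam)
    · filter_upwards [ae_restrict_mem measurableSet_Ioi] with γ hγ
      simp only [Pi.zero_apply]
      have hγ0 : 0 < γ := lt_trans hlam hγ
      have : lam / γ ≤ 1 := (div_le_one hγ0).2 (le_of_lt hγ)
      exact mul_nonneg (by linarith) (hnn γ)
    · exact HasSubset.Subset.eventuallyLE (Set.Ioi_subset_Ioi (by linarith))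
  have h2 : (1/2) * Fbar f (2*lam) ≤ ∫ γ in Set.Ioi (2*lam), (1 - lam/γ) * f γ := by
    have : (∫ γ in Set.Ioi (2*lam), (1/2) * f γ)
        ≤ ∫ γ in Set.Ioi (2*lam), (1 - lam/γ) * f γ := by
      apply setIntegral_mono_on
        ((hint.mono_set (Set.Ioi_subset_Ioi (by linarith))).const_mul _)
        ((gint hnn hcont hint hlam).mono_set (Set.Ioi_subset_Ioi (by linarith)))
        measurableSet_Ioi
      intro γ hγ
      have hγ2 : 2*lam < γ := hγ
      have hγ0 : 0 < γ := by linarith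
      have : lam / γ ≤ 1/2 := by rw [div_le_div_iff₀ hγ0 (by norm_num)]; linarith
      exact mul_le_mul_of_nonneg_right (by linarith) (hnn γ)
    rwa [integral_const_mul] at this
  have h3 : 0 < (1/2) * Fbar f (2*lam) := by
    have := hFpos (2*lam) (by linarith); linarith
  linarith

lemma lamG_le (hnn : ∀ x, 0 ≤ f x) (hcont : ContinuousOn f (Set.Ioi 0))
    (hint : IntegrableOn f (Set.Ioi 0))
    (hmean : IntegrableOn (fun γ => γ * f γ) (Set.Ioi 0)) {lam : ℝ} (hlam : 0 < lam) :
    lam * Gfun f lam ≤ Htail f lam / lam := by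
  rw [lamG_eq hlam]
  have h1 : (∫ γ in Set.Ioi lam, (1 - lam/γ) * f γ)
      ≤ ∫ γ in Set.Ioi lam, (1/lam) * ((γ - lam) * f γ) := by
    apply setIntegral_mono_on (gint hnn hcont hint hlam)
      ((htail_int hint hmean hlam).const_mul _) measurableSet_Ioi
    intro γ hγ
    have hγl : lam < γ := hγ
    have hγ0 : 0 < γ := lt_trans hlam hγl
    have e : 1 - lam/γ = (γ - lam)/γ := by field_simp
    have key : (γ - lam)/γ ≤ (γ - lam)/lam := by
      rw [div_le_div_iff₀ hγ0 hlam]; nlinarith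
    have := mul_le_mul_of_nonneg_right key (hnn γ)
    rw [e]
    calc (γ - lam)/γ * f γ ≤ (γ - lam)/lam * f γ := this
      _ = 1/lam * ((γ - lam) * f γ) := by ring
  rw [integral_const_mul] at h1
  calc (∫ γ in Set.Ioi lam, (1 - lam/γ) * f γ) ≤ 1/lam * Htail f lam := h1
    _ = Htail f lam / lam := by ring

lemma rint (hnn : ∀ x, 0 ≤ f x) (hcont : ContinuousOn f (Set.Ioi 0))
    (hmean : IntegrableOn (fun γ => γ * f γ) (Set.Ioi 0))
    {lam Q : ℝ} (hlam : 0 < lam) (hQ : 0 ≤ Q) :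
    IntegrableOn (fun γ => Real.log (1 + γ * Q) * f γ) (Set.Ioi lam) := by
  have hsub : Set.Ioi lam ⊆ Set.Ioi 0 := Set.Ioi_subset_Ioi hlam.le
  have hpos : ∀ γ ∈ Set.Ioi lam, (0:ℝ) < 1 + γ * Q := fun γ hγ => by
    have : 0 < γ := lt_trans hlam hγ
    nlinarith [mul_nonneg this.le hQ]
  have hmeas : AEStronglyMeasurable (fun γ => Real.log (1 + γ * Q) * f γ)
      (volume.restrict (Set.Ioi lam)) := by
    apply ContinuousOn.aestronglyMeasurable _ measurableSet_Ioi
    exact ((continuousOn_const.add (continuousOn_id.mul continuousOn_const)).log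
      (fun γ hγ => ne_of_gt (hpos γ hγ))).mul (hcont.mono hsub)
  refine Integrable.mono ((hmean.mono_set hsub).const_mul Q) hmeas ?_
  filter_upwards [ae_restrict_mem measurableSet_Ioi] with γ hγ
  have hγ0 : 0 < γ := lt_trans hlam hγ
  have hlog0 : 0 ≤ Real.log (1 + γ * Q) := Real.log_nonneg (by nlinarith [mul_nonneg hγ0.le hQ])
  have hlog1 : Real.log (1 + γ * Q) ≤ γ * Q := by
    have := Real.log_le_sub_one_of_pos (hpos γ hγ)
    linarith
  rw [Real.norm_eq_abs, Real.norm_eq_abs, abs_mul, abs_of_nonneg (hnn γ),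
    abs_of_nonneg hlog0, abs_mul]
  have : Real.log (1 + γ * Q) * f γ ≤ γ * Q * f γ :=
    mul_le_mul_of_nonneg_right hlog1 (hnn γ)
  calc Real.log (1 + γ * Q) * f γ ≤ γ * Q * f γ := this
    _ ≤ |Q| * |γ * f γ| := by
        rw [abs_of_nonneg hQ, abs_of_nonneg (mul_nonneg hγ0.le (hnn γ))]; ring_nf; exact le_refl _

lemma rupper (hnn : ∀ x, 0 ≤ f x) (hcont : ContinuousOn f (Set.Ioi 0))
    (hmean : IntegrableOn (fun γ => γ * f γ) (Set.Ioi 0))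
    {lam Q : ℝ} (hlam : 0 < lam) (hQ : 0 ≤ Q) :
    (∫ γ in Set.Ioi lam, Real.log (1 + γ * Q) * f γ) ≤ Q * Mtail f lam := by
  have hsub : Set.Ioi lam ⊆ Set.Ioi 0 := Set.Ioi_subset_Ioi hlam.le
  have h1 : (∫ γ in Set.Ioi lam, Real.log (1 + γ * Q) * f γ)
      ≤ ∫ γ in Set.Ioi lam, Q * (γ * f γ) := by
    apply setIntegral_mono_on (rint hnn hcont hmean hlam hQ)
      ((hmean.mono_set hsub).const_mul Q) measurableSet_Ioi
    intro γ hγ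
    have hγ0 : 0 < γ := lt_trans hlam hγ
    have hpos : (0:ℝ) < 1 + γ * Q := by nlinarith [mul_nonneg hγ0.le hQ]
    have hlog1 : Real.log (1 + γ * Q) ≤ γ * Q := by
      have := Real.log_le_sub_one_of_pos hpos; linarith
    calc Real.log (1 + γ * Q) * f γ ≤ γ * Q * f γ :=
          mul_le_mul_of_nonneg_right hlog1 (hnn γ)
      _ = Q * (γ * f γ) := by ring
  rwa [integral_const_mul] at h1

lemma rlower (hnn : ∀ x, 0 ≤ f x) (hcont : ContinuousOn f (Set.Ioi 0))
    (hint : IntegrableOn f (Set.Ioi 0))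
    (hmean : IntegrableOn (fun γ => γ * f γ) (Set.Ioi 0))
    {lam Q : ℝ} (hlam : 0 < lam) (hQ : 0 ≤ Q) :
    Fbar f lam * Real.log (1 + lam * Q)
      ≤ ∫ γ in Set.Ioi lam, Real.log (1 + γ * Q) * f γ := by
  have hsub : Set.Ioi lam ⊆ Set.Ioi 0 := Set.Ioi_subset_Ioi hlam.le
  have h1 : (∫ γ in Set.Ioi lam, Real.log (1 + lam * Q) * f γ)
      ≤ ∫ γ in Set.Ioi lam, Real.log (1 + γ * Q) * f γ := by
    apply setIntegral_mono_on ((hint.mono_set hsub).const_mul _)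
      (rint hnn hcont hmean hlam hQ) measurableSet_Ioi
    intro γ hγ
    have hγl : lam < γ := hγ
    have hll : Real.log (1 + lam * Q) ≤ Real.log (1 + γ * Q) := by
      apply Real.log_le_log (by nlinarith [mul_nonneg hlam.le hQ])
      nlinarith
    exact mul_le_mul_of_nonneg_right hll (hnn γ)
  rw [integral_const_mul] at h1
  calc Fbar f lam * Real.log (1 + lam * Q) = Real.log (1 + lam * Q) * Fbar f lam := by ring
    _ ≤ _ := h1

lemma log_ratio_tendsto :
    Tendsto (fun y => Real.log (1 + y) / y) (𝓝[>] (0:ℝ)) (𝓝 1) := by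
  have h1 : HasDerivAt (fun y : ℝ => 1 + y) 1 0 := by
    simpa using (hasDerivAt_id (0:ℝ)).const_add (1:ℝ)
  have h : HasDerivAt (fun y : ℝ => Real.log (1 + y)) 1 0 := by
    have := h1.log (by norm_num)
    simpa using this
  rw [hasDerivAt_iff_tendsto_slope] at h
  have hmono : 𝓝[>] (0:ℝ) ≤ 𝓝[≠] (0:ℝ) :=
    nhdsWithin_mono _ fun y hy => ne_of_gt hy
  refine (h.mono_left hmono).congr' ?_
  filter_upwards [self_mem_nhdsWithin] with y hy
  have hy0 : y ≠ 0 := ne_of_gt hy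
  simp [slope_def_field]

end OnOffAux

open OnOffAux

/-- Theorem 2 (achievability, `l = ∞` case): the on-off scheme transmitting with
constant power `Q(λ) = G(λ)/(1 − F(λ))` whenever the channel gain exceeds `λ`
achieves rate `R(λ) = ∫_λ^∞ log(1 + γ·Q(λ)) f(γ) dγ` with `R(λ)/(λ·G(λ)) → 1`,
i.e. the on-off signaling (E4B12) is asymptotically capacity-achieving. -/
theorem onoff_achieves_capacity_GFR_infinite (f : ℝ → ℝ)
    (hnn : ∀ x, 0 ≤ f x)
    (hzero : ∀ x ≤ (0:ℝ), f x = 0)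
    (hcont : ContinuousOn f (Set.Ioi (0:ℝ)))
    (hint : IntegrableOn f (Set.Ioi (0:ℝ)))
    (hone : ∫ γ in Set.Ioi (0:ℝ), f γ = 1)
    (hsupp : ∀ t > (0:ℝ), Fcdf f t < 1)
    (hmean : IntegrableOn (fun γ => γ * f γ) (Set.Ioi (0:ℝ)))
    (hlog : IntegrableOn (fun γ => Real.log γ * f γ) (Set.Ioi (1:ℝ)))
    (hGFR : Tendsto (fun t => t * f t / (1 - Fcdf f t)) atTop atTop) :
    Tendsto
      (fun lam =>
        (∫ γ in Set.Ioi lam,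
            Real.log (1 + γ * (Gfun f lam / (1 - Fcdf f lam))) * f γ) /
          (lam * Gfun f lam))
      atTop (nhds 1) := by
  have hFb : ∀ t : ℝ, 0 < t → Fbar f t = 1 - Fcdf f t := fun t ht => fbar_eq hint hone ht.le
  have hFpos : ∀ t : ℝ, 0 < t → 0 < Fbar f t := fun t ht => fbar_pos hint hone hsupp ht
  -- the central limit : Htail / (lam * Fbar) → 0
  have T0 : Tendsto (fun lam => Htail f lam / (lam * Fbar f lam)) atTop (𝓝 0) := by
    rw [Metric.tendsto_atTop]
    intro ε hε
    obtain ⟨c, hc2, hcε⟩ : ∃ c : ℕ, 2 ≤ c ∧ 1 / ((c:ℝ) - 1) < ε := by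
      obtain ⟨n, hn⟩ := exists_nat_gt (1/ε + 2)
      have hεinv : 0 < 1/ε := by positivity
      refine ⟨n, ?_, ?_⟩
      · exact_mod_cast le_of_lt (lt_of_le_of_lt (by linarith : (2:ℝ) ≤ 1/ε + 2) hn)
      · have h3 : 1/ε < (n:ℝ) - 1 := by linarith
        rw [div_lt_iff₀ (by linarith : (0:ℝ) < (n:ℝ) - 1)]
        rw [div_lt_iff₀ hε] at h3
        nlinarith
    have hev : ∀ᶠ t in atTop, ((c:ℝ) ≤ t * f t / (1 - Fcdf f t)) ∧ 0 < t :=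
      (hGFR.eventually_ge_atTop (c:ℝ)).and (eventually_gt_atTop 0)
    obtain ⟨a, ha⟩ := eventually_atTop.1 hev
    have hl0pos : (0:ℝ) < max a 1 := lt_of_lt_of_le one_pos (le_max_right a 1)
    have hgfr : ∀ t, max a 1 ≤ t → (c:ℝ) * Fbar f t ≤ t * f t := by
      intro t ht
      have h := ha t (le_trans (le_max_left a 1) ht)
      have ht0 : 0 < t := h.2
      have hFp := hFpos t ht0
      have h1 := h.1
      rw [← hFb t ht0, le_div_iff₀ hFp] at h1
      linarith
    refine ⟨max a 1, fun lam hlam => ?_⟩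
    have hlam0 : 0 < lam := lt_of_lt_of_le hl0pos hlam
    have hH := htail_le hnn hint hcont hmean hc2 hl0pos hgfr hlam
    have hFp := hFpos lam hlam0
    have hden : 0 < lam * Fbar f lam := mul_pos hlam0 hFp
    have hHnn : 0 ≤ Htail f lam := htail_nonneg hnn lam
    have hc1 : (0:ℝ) < (c:ℝ) - 1 := by
      have : (2:ℝ) ≤ (c:ℝ) := by exact_mod_cast hc2
      linarith
    have h9 : Htail f lam / (lam * Fbar f lam) ≤ 1/((c:ℝ)-1) := by
      rw [le_div_iff₀ hc1] at hH
      rw [div_le_div_iff₀ hden hc1]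
      linarith
    rw [Real.dist_eq, sub_zero, abs_of_nonneg (div_nonneg hHnn hden.le)]
    linarith
  -- x = lam*G/Fbar tends to 0 from above
  have TX : Tendsto (fun lam => lam * Gfun f lam / Fbar f lam) atTop (𝓝[>] (0:ℝ)) := by
    rw [tendsto_nhdsWithin_iff]
    constructor
    · apply tendsto_of_tendsto_of_tendsto_of_le_of_le' tendsto_const_nhds T0
      · filter_upwards [eventually_gt_atTop (0:ℝ)] with lam hlam
        exact le_of_lt (div_pos (lamG_pos hnn hcont hint hFpos hlam) (hFpos lam hlam))
      · filter_upwards [eventually_gt_atTop (0:ℝ)] with lam hlam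
        have h1 := lamG_le hnn hcont hint hmean hlam
        have hFp := hFpos lam hlam
        calc lam * Gfun f lam / Fbar f lam ≤ (Htail f lam / lam) / Fbar f lam :=
              div_le_div_of_nonneg_right h1 hFp.le
          _ = Htail f lam / (lam * Fbar f lam) := by rw [div_div]
    · filter_upwards [eventually_gt_atTop (0:ℝ)] with lam hlam
      exact div_pos (lamG_pos hnn hcont hint hFpos hlam) (hFpos lam hlam)
  have TL : Tendsto (fun lam => Real.log (1 + lam * Gfun f lam / Fbar f lam) /
      (lam * Gfun f lam / Fbar f lam)) atTop (𝓝 1) := log_ratio_tendsto.comp TX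
  have TU : Tendsto (fun lam => 1 + Htail f lam / (lam * Fbar f lam)) atTop (𝓝 1) := by
    have := tendsto_const_nhds (x := (1:ℝ)) (f := atTop (α := ℝ))
    simpa using this.add T0
  apply tendsto_of_tendsto_of_tendsto_of_le_of_le' TL TU
  · -- lower bound
    filter_upwards [eventually_gt_atTop (0:ℝ)] with lam hlam
    have hFp := hFpos lam hlam
    have hP : 0 < lam * Gfun f lam := lamG_pos hnn hcont hint hFpos hlam
    have hG : 0 < Gfun f lam := by
      rcases mul_pos_iff.1 hP with ⟨_, h⟩ | ⟨h, _⟩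
      · exact h
      · exact absurd h (not_lt.2 hlam.le)
    rw [← hFb lam hlam]
    have hQ : 0 ≤ Gfun f lam / Fbar f lam := le_of_lt (div_pos hG hFp)
    have hlow := rlower hnn hcont hint hmean hlam hQ
    have e1 : lam * (Gfun f lam / Fbar f lam) = lam * Gfun f lam / Fbar f lam :=
      (mul_div_assoc lam _ _).symm
    rw [e1] at hlow
    have e2 : Real.log (1 + lam * Gfun f lam / Fbar f lam) /
        (lam * Gfun f lam / Fbar f lam)
        = Fbar f lam * Real.log (1 + lam * Gfun f lam / Fbar f lam) /
          (lam * Gfun f lam) := by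
      rw [div_div_eq_mul_div]
      ring
    rw [e2]
    exact div_le_div_of_nonneg_right hlow hP.le
  · -- upper bound
    filter_upwards [eventually_gt_atTop (0:ℝ)] with lam hlam
    have hFp := hFpos lam hlam
    have hP : 0 < lam * Gfun f lam := lamG_pos hnn hcont hint hFpos hlam
    have hG : 0 < Gfun f lam := by
      rcases mul_pos_iff.1 hP with ⟨_, h⟩ | ⟨h, _⟩
      · exact h
      · exact absurd h (not_lt.2 hlam.le)
    rw [← hFb lam hlam]
    have hQ : 0 ≤ Gfun f lam / Fbar f lam := le_of_lt (div_pos hG hFp)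
    have hup := rupper hnn hcont hmean hlam hQ
    have hMt : Mtail f lam = Htail f lam + lam * Fbar f lam := by
      have := htail_eq hint hmean hlam
      linarith
    rw [hMt] at hup
    have e2 : (Gfun f lam / Fbar f lam) * (Htail f lam + lam * Fbar f lam) /
        (lam * Gfun f lam) = 1 + Htail f lam / (lam * Fbar f lam) := by
      field_simp
      ring
    calc (∫ γ in Set.Ioi lam, Real.log (1 + γ * (Gfun f lam / Fbar f lam)) * f γ) /
          (lam * Gfun f lam)
        ≤ (Gfun f lam / Fbar f lam) * (Htail f lam + lam * Fbar f lam) /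
          (lam * Gfun f lam) := div_le_div_of_nonneg_right hup hP.le
      _ = 1 + Htail f lam / (lam * Fbar f lam) := e2
end

section
/- Fix K ≥ 1 and an index k. For every vector λ = (λ₁,…,λ_K) of positive reals, the following two inequalities hold: ∏_{i≠k} F_i(λ_i) · ∫_{λ_k}^∞ (1/λ_k − 1/h) f_k(h) dh ≤ ∫_{λ_k}^∞ (1/λ_k − 1/h) · ∏_{i≠k} F_i((λ_i/λ_k)·h) · f_k(h) dh ≤ ∫_{λ_k}^∞ (1/λ_k − 1/h) f_k(h) dh. (Sandwich (E311)–(E313) comparing the multi-user power constraint integral G_k(λ) with the single-user one.) -/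
open MeasureTheory Filter Set Topology

lemma Fcdf_nonneg {f : ℝ → ℝ} (hnn : ∀ x, 0 ≤ f x) {t : ℝ} (ht : 0 ≤ t) :
    0 ≤ Fcdf f t :=
  intervalIntegral.integral_nonneg ht (fun x _ => hnn x)

lemma Fcdf_le_one {f : ℝ → ℝ} (hnn : ∀ x, 0 ≤ f x)
    (hint : IntegrableOn f (Set.Ioi (0:ℝ))) (hone : ∫ γ in Set.Ioi (0:ℝ), f γ = 1)
    {t : ℝ} (ht : 0 ≤ t) : Fcdf f t ≤ 1 := by
  rw [Fcdf, intervalIntegral.integral_of_le ht, ← hone]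
  exact setIntegral_mono_set hint (Filter.Eventually.of_forall fun x => hnn x)
    (Filter.Eventually.of_forall Set.Ioc_subset_Ioi_self)

lemma Fcdf_mono {f : ℝ → ℝ} (hnn : ∀ x, 0 ≤ f x) (hI : Integrable f)
    {a b : ℝ} (hab : a ≤ b) : Fcdf f a ≤ Fcdf f b := by
  have h1 : IntervalIntegrable f volume 0 a := hI.intervalIntegrable
  have h2 : IntervalIntegrable f volume a b := hI.intervalIntegrable
  have : Fcdf f b = Fcdf f a + ∫ x in a..b, f x := by
    rw [Fcdf, Fcdf, intervalIntegral.integral_add_adjacent_intervals h1 h2]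
  rw [this]
  have : 0 ≤ ∫ x in a..b, f x := intervalIntegral.integral_nonneg hab (fun x _ => hnn x)
  linarith


/-- Sandwich (E311)–(E313): for positive Lagrange multipliers `λ₁,…,λ_K`, the
multi-user power integral `G_k(λ)` of (E307) is sandwiched between
`∏_{i≠k} F_i(λ_i)` times the single-user power integral and the single-user
power integral itself. -/
theorem mac_power_integral_sandwich (K : ℕ) (hK : 1 ≤ K) (k : Fin K)
    (f : Fin K → ℝ → ℝ)
    (hmeas : ∀ i, Measurable (f i))
    (hnn : ∀ i x, 0 ≤ f i x)
    (hzero : ∀ i, ∀ x ≤ (0:ℝ), f i x = 0)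
    (hint : ∀ i, IntegrableOn (f i) (Set.Ioi (0:ℝ)))
    (hone : ∀ i, ∫ γ in Set.Ioi (0:ℝ), f i γ = 1)
    (lam : Fin K → ℝ) (hlam : ∀ i, 0 < lam i) :
    (∏ i ∈ Finset.univ.erase k, Fcdf (f i) (lam i)) *
        ∫ h in Set.Ioi (lam k), (1 / lam k - 1 / h) * f k h ≤
      (∫ h in Set.Ioi (lam k),
        (1 / lam k - 1 / h) *
          (∏ i ∈ Finset.univ.erase k, Fcdf (f i) (lam i / lam k * h)) * f k h) ∧
    (∫ h in Set.Ioi (lam k),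
        (1 / lam k - 1 / h) *
          (∏ i ∈ Finset.univ.erase k, Fcdf (f i) (lam i / lam k * h)) * f k h) ≤
      ∫ h in Set.Ioi (lam k), (1 / lam k - 1 / h) * f k h := by
  have hlamk := hlam k
  -- global integrability of each f i
  have hI : ∀ i, Integrable (f i) := by
    intro i
    have heq : f i = (Set.Ioi (0:ℝ)).indicator (f i) := by
      funext x
      by_cases hx : x ∈ Set.Ioi (0:ℝ)
      · simp [hx]
      · simp [hx, hzero i x (le_of_not_gt hx)]
    rw [heq]
    exact (hint i).integrable_indicator measurableSet_Ioi
  -- weight nonneg on Ioi (lam k)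
  have hw : ∀ h ∈ Set.Ioi (lam k), 0 ≤ 1 / lam k - 1 / h := by
    intro h hh
    have : (1:ℝ) / h ≤ 1 / lam k := by
      apply one_div_le_one_div_of_le hlamk (le_of_lt hh)
    linarith
  -- bounds on the product at (lam i / lam k * h)
  have hPmem : ∀ h ∈ Set.Ioi (lam k),
      (∏ i ∈ Finset.univ.erase k, Fcdf (f i) (lam i)) ≤
        (∏ i ∈ Finset.univ.erase k, Fcdf (f i) (lam i / lam k * h)) ∧
      0 ≤ (∏ i ∈ Finset.univ.erase k, Fcdf (f i) (lam i / lam k * h)) ∧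
      (∏ i ∈ Finset.univ.erase k, Fcdf (f i) (lam i / lam k * h)) ≤ 1 := by
    intro h hh
    have hh' : lam k < h := hh
    have harg : ∀ i : Fin K, lam i ≤ lam i / lam k * h := by
      intro i
      have h1 : lam i / lam k * lam k ≤ lam i / lam k * h :=
        mul_le_mul_of_nonneg_left (le_of_lt hh') (le_of_lt (div_pos (hlam i) hlamk))
      rwa [div_mul_cancel₀ _ (ne_of_gt hlamk)] at h1
    have hargpos : ∀ i : Fin K, 0 ≤ lam i / lam k * h :=
      fun i => le_trans (le_of_lt (hlam i)) (harg i)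
    refine ⟨Finset.prod_le_prod (fun i _ => Fcdf_nonneg (hnn i) (le_of_lt (hlam i)))
      (fun i _ => Fcdf_mono (hnn i) (hI i) (harg i)), ?_, ?_⟩
    · exact Finset.prod_nonneg fun i _ => Fcdf_nonneg (hnn i) (hargpos i)
    · exact Finset.prod_le_one (fun i _ => Fcdf_nonneg (hnn i) (hargpos i))
        (fun i _ => Fcdf_le_one (hnn i) (hint i) (hone i) (hargpos i))
  -- measurability of the product function
  have hFc : ∀ i : Fin K, Continuous (Fcdf (f i)) := fun i => (hI i).continuous_primitive 0
  have hProdMeas : Measurable fun h : ℝ =>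
      ∏ i ∈ Finset.univ.erase k, Fcdf (f i) (lam i / lam k * h) := by
    apply Finset.measurable_prod
    intro i _
    exact ((hFc i).comp (continuous_const.mul continuous_id)).measurable
  have hwMeas : Measurable fun h : ℝ => 1 / lam k - 1 / h := by
    apply Measurable.sub measurable_const
    exact measurable_const.div measurable_id
  -- integrability of outer bound
  have hBound : IntegrableOn (fun h => 1 / lam k * f k h) (Set.Ioi (lam k)) :=
    (((hint k).mono_set (Set.Ioi_subset_Ioi (le_of_lt hlamk))).const_mul _)
  have hIu : IntegrableOn (fun h => (1 / lam k - 1 / h) * f k h) (Set.Ioi (lam k)) := by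
    apply Integrable.mono' hBound
      ((hwMeas.mul (hmeas k)).aestronglyMeasurable)
    filter_upwards [ae_restrict_mem measurableSet_Ioi] with h hh
    simp only [Pi.mul_apply]
    rw [Real.norm_eq_abs, abs_of_nonneg (mul_nonneg (hw h hh) (hnn k h))]
    have : 1 / lam k - 1 / h ≤ 1 / lam k := by
      have : 0 < h := lt_trans hlamk hh
      have := one_div_pos.mpr this
      linarith
    exact mul_le_mul_of_nonneg_right this (hnn k h)
  have hIm : IntegrableOn (fun h => (1 / lam k - 1 / h) *
      (∏ i ∈ Finset.univ.erase k, Fcdf (f i) (lam i / lam k * h)) * f k h)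
      (Set.Ioi (lam k)) := by
    apply Integrable.mono' hBound
      (((hwMeas.mul hProdMeas).mul (hmeas k)).aestronglyMeasurable)
    filter_upwards [ae_restrict_mem measurableSet_Ioi] with h hh
    obtain ⟨_, hP0, hP1⟩ := hPmem h hh
    simp only [Pi.mul_apply]
    rw [Real.norm_eq_abs, abs_of_nonneg (mul_nonneg (mul_nonneg (hw h hh) hP0) (hnn k h))]
    have h1 : (1 / lam k - 1 / h) *
        (∏ i ∈ Finset.univ.erase k, Fcdf (f i) (lam i / lam k * h)) ≤ 1 / lam k - 1 / h := by
      calc _ ≤ (1 / lam k - 1 / h) * 1 := mul_le_mul_of_nonneg_left hP1 (hw h hh)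
        _ = _ := mul_one _
    have h2 : 1 / lam k - 1 / h ≤ 1 / lam k := by
      have : 0 < h := lt_trans hlamk hh
      have := one_div_pos.mpr this
      linarith
    exact mul_le_mul_of_nonneg_right (le_trans h1 h2) (hnn k h)
  constructor
  · rw [← MeasureTheory.integral_const_mul]
    apply setIntegral_mono_on (hIu.const_mul _) hIm measurableSet_Ioi
    intro h hh
    obtain ⟨hPle, hP0, hP1⟩ := hPmem h hh
    have hc0 : 0 ≤ ∏ i ∈ Finset.univ.erase k, Fcdf (f i) (lam i) :=
      Finset.prod_nonneg fun i _ => Fcdf_nonneg (hnn i) (le_of_lt (hlam i))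
    have : (∏ i ∈ Finset.univ.erase k, Fcdf (f i) (lam i)) * (1 / lam k - 1 / h) ≤
        (1 / lam k - 1 / h) * (∏ i ∈ Finset.univ.erase k, Fcdf (f i) (lam i / lam k * h)) := by
      rw [mul_comm]
      exact mul_le_mul_of_nonneg_left hPle (hw h hh)
    calc (∏ i ∈ Finset.univ.erase k, Fcdf (f i) (lam i)) * ((1 / lam k - 1 / h) * f k h)
        = (∏ i ∈ Finset.univ.erase k, Fcdf (f i) (lam i)) * (1 / lam k - 1 / h) * f k h := by
          ring
      _ ≤ _ := mul_le_mul_of_nonneg_right this (hnn k h)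
  · apply setIntegral_mono_on hIm hIu measurableSet_Ioi
    intro h hh
    obtain ⟨_, hP0, hP1⟩ := hPmem h hh
    calc (1 / lam k - 1 / h) *
        (∏ i ∈ Finset.univ.erase k, Fcdf (f i) (lam i / lam k * h)) * f k h
        ≤ (1 / lam k - 1 / h) * 1 * f k h :=
          mul_le_mul_of_nonneg_right (mul_le_mul_of_nonneg_left hP1 (hw h hh)) (hnn k h)
      _ = (1 / lam k - 1 / h) * f k h := by ring
end

section
/- For the exponential density f(x) = e^{−x} on (0,∞) (Rayleigh fading with unit mean channel power gain), the function G(λ) = ∫_λ^∞ (1/λ − 1/γ) e^{−γ} dγ satisfies (−log G(λ))/λ → 1 as λ → ∞. Equivalently, the water level λ(P̄) determined by G(λ(P̄)) = P̄ satisfies λ(P̄)/log(1/P̄) → 1 as P̄ → 0⁺; in particular λ(α·P̄) ≈ λ(P̄) for every fixed α ∈ (0,1], so time-sharing is asymptotically optimal for the broadcast channel with independent Rayleigh fading. (Example 1.) -/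
open MeasureTheory Filter Set Topology

/-- The average-power function `G(λ) = ∫_λ^∞ (1/λ − 1/γ) e^{−γ} dγ` for the
exponential density (unit-mean Rayleigh fading). -/
noncomputable def Gexp (t : ℝ) : ℝ := ∫ γ in Set.Ioi t, (1 / t - 1 / γ) * Real.exp (-γ)


lemma integrable_aux {t : ℝ} (ht : 0 < t) :
    IntegrableOn (fun γ => (1 / t - 1 / γ) * Real.exp (-γ)) (Ioi t) := by
  have hdom : IntegrableOn (fun γ => (1 / t) * Real.exp (-γ)) (Ioi t) := by
    have := (exp_neg_integrableOn_Ioi t (one_pos)).const_mul (1 / t)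
    simpa [IntegrableOn] using this
  refine Integrable.mono hdom ?_ ?_
  · refine (ContinuousOn.mul ?_ (Real.continuous_exp.comp continuous_neg).continuousOn).aestronglyMeasurable measurableSet_Ioi
    exact continuousOn_const.sub (continuousOn_const.div continuousOn_id (fun x hx => ne_of_gt (ht.trans hx)))
  · filter_upwards [ae_restrict_mem measurableSet_Ioi] with γ hγ
    have hγ0 : 0 < γ := ht.trans hγ
    have h1 : 0 ≤ 1 / t - 1 / γ := by
      have := one_div_le_one_div_of_le ht (le_of_lt hγ)
      linarith
    have h2 : 1 / t - 1 / γ ≤ 1 / t := by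
      have : 0 ≤ 1 / γ := by positivity
      linarith
    rw [Real.norm_eq_abs, Real.norm_eq_abs, abs_mul, abs_mul, abs_of_nonneg h1,
      abs_of_pos (Real.exp_pos _)]
    have h3 : (1:ℝ)/t ≤ |1/t| := le_abs_self _
    have := (Real.exp_pos (-γ)).le
    nlinarith

lemma Gexp_le {t : ℝ} (ht : 0 < t) : Gexp t ≤ Real.exp (-t) / t := by
  have h1 : Gexp t ≤ ∫ γ in Ioi t, (1 / t) * Real.exp (-γ) := by
    refine setIntegral_mono_on (integrable_aux ht) ?_ measurableSet_Ioi ?_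
    · simpa [IntegrableOn] using (exp_neg_integrableOn_Ioi t one_pos).const_mul (1 / t)
    · intro γ hγ
      have hγ0 : 0 < γ := ht.trans hγ
      have : 0 ≤ 1 / γ := by positivity
      have := (Real.exp_pos (-γ)).le
      nlinarith
  have h2 : (∫ γ in Ioi t, (1 / t) * Real.exp (-γ)) = Real.exp (-t) / t := by
    rw [MeasureTheory.integral_const_mul, integral_exp_neg_Ioi]
    ring
  linarith

lemma le_Gexp {t : ℝ} (ht : 0 < t) : 1 / (t * (t + 1)) * Real.exp (-(t + 1)) ≤ Gexp t := by
  have ht1 : (0:ℝ) < t + 1 := by linarith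
  have h0 : (∫ γ in Ioi (t+1), (1 / t - 1 / (t+1)) * Real.exp (-γ))
      = 1 / (t * (t + 1)) * Real.exp (-(t + 1)) := by
    rw [MeasureTheory.integral_const_mul, integral_exp_neg_Ioi]
    have : 1 / t - 1 / (t+1) = 1 / (t * (t+1)) := by
      field_simp
      ring
    rw [this]
  have h1 : (∫ γ in Ioi (t+1), (1 / t - 1 / (t+1)) * Real.exp (-γ))
      ≤ ∫ γ in Ioi (t+1), (1 / t - 1 / γ) * Real.exp (-γ) := by
    refine setIntegral_mono_on ?_ ((integrable_aux ht).mono_set (Ioi_subset_Ioi (by linarith)))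
      measurableSet_Ioi ?_
    · simpa [IntegrableOn] using (exp_neg_integrableOn_Ioi (t+1) one_pos).const_mul (1 / t - 1 / (t+1))
    · intro γ hγ
      have hγ1 : t + 1 < γ := hγ
      have hγ0 : 0 < γ := by linarith
      have : 1 / γ ≤ 1 / (t + 1) := one_div_le_one_div_of_le ht1 (le_of_lt hγ1)
      have := (Real.exp_pos (-γ)).le
      nlinarith
  have h2 : (∫ γ in Ioi (t+1), (1 / t - 1 / γ) * Real.exp (-γ))
      ≤ ∫ γ in Ioi t, (1 / t - 1 / γ) * Real.exp (-γ) := by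
    refine setIntegral_mono_set (integrable_aux ht) ?_ ?_
    · filter_upwards [ae_restrict_mem measurableSet_Ioi] with γ hγ
      have hγ0 : 0 < γ := ht.trans hγ
      have h1 : 0 ≤ 1 / t - 1 / γ := by
        have := one_div_le_one_div_of_le ht (le_of_lt hγ)
        linarith
      positivity
    · exact HasSubset.Subset.eventuallyLE (Ioi_subset_Ioi (by linarith))
  calc 1 / (t * (t + 1)) * Real.exp (-(t + 1)) = _ := h0.symm
    _ ≤ _ := h1
    _ ≤ Gexp t := h2

lemma Gexp_pos {t : ℝ} (ht : 0 < t) : 0 < Gexp t := by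
  have := le_Gexp ht
  have h : 0 < 1 / (t * (t + 1)) * Real.exp (-(t + 1)) := by
    have ht1 : (0:ℝ) < t + 1 := by linarith
    positivity
  linarith

lemma log_div_tendsto : Tendsto (fun x : ℝ => Real.log x / x) atTop (nhds 0) :=
  Real.isLittleO_log_id_atTop.tendsto_div_nhds_zero

lemma log_succ_div_tendsto : Tendsto (fun x : ℝ => Real.log (x + 1) / x) atTop (nhds 0) := by
  have h1 : (fun x : ℝ => Real.log (x + 1)) =o[atTop] (fun x : ℝ => x + 1) :=
    Real.isLittleO_log_id_atTop.comp_tendsto (tendsto_atTop_add_const_right atTop 1 tendsto_id)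
  have h2 : (fun x : ℝ => x + 1) =O[atTop] (fun x : ℝ => x) := by
    rw [Asymptotics.isBigO_iff]
    refine ⟨2, ?_⟩
    filter_upwards [eventually_ge_atTop (1:ℝ)] with x hx
    rw [Real.norm_eq_abs, Real.norm_eq_abs, abs_of_nonneg (by linarith), abs_of_nonneg (by linarith)]
    linarith
  exact (h1.trans_isBigO h2).tendsto_div_nhds_zero

lemma main_limit : Tendsto (fun lam => -Real.log (Gexp lam) / lam) atTop (nhds 1) := by
  have hlow : Tendsto (fun x : ℝ => (x + Real.log x) / x) atTop (nhds 1) := by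
    have : Tendsto (fun x : ℝ => 1 + Real.log x / x) atTop (nhds (1 + 0)) :=
      tendsto_const_nhds.add log_div_tendsto
    rw [add_zero] at this
    refine this.congr' ?_
    filter_upwards [eventually_gt_atTop (0:ℝ)] with x hx
    field_simp
  have hup : Tendsto (fun x : ℝ => (x + 1 + Real.log x + Real.log (x + 1)) / x) atTop (nhds 1) := by
    have hinv : Tendsto (fun x : ℝ => 1 / x) atTop (nhds 0) := by
      simpa [one_div] using (tendsto_inv_atTop_zero : Tendsto (fun x : ℝ => x⁻¹) atTop (nhds 0))
    have h : Tendsto (fun x : ℝ => 1 + 1 / x + Real.log x / x + Real.log (x + 1) / x) atTop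
        (nhds (1 + 0 + 0 + 0)) :=
      ((tendsto_const_nhds.add hinv).add log_div_tendsto).add log_succ_div_tendsto
    norm_num at h
    refine h.congr' ?_
    filter_upwards [eventually_gt_atTop (0:ℝ)] with x hx
    field_simp
  refine tendsto_of_tendsto_of_tendsto_of_le_of_le' hlow hup ?_ ?_
  · filter_upwards [eventually_gt_atTop (0:ℝ)] with x hx
    have hG : 0 < Gexp x := Gexp_pos hx
    have hle : Gexp x ≤ Real.exp (-x) / x := Gexp_le hx
    have hlog : Real.log (Gexp x) ≤ Real.log (Real.exp (-x) / x) := Real.log_le_log hG hle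
    rw [Real.log_div (Real.exp_ne_zero _) (ne_of_gt hx), Real.log_exp] at hlog
    apply div_le_div_of_nonneg_right ?_ hx.le
    linarith
  · filter_upwards [eventually_gt_atTop (0:ℝ)] with x hx
    have hG : 0 < Gexp x := Gexp_pos hx
    have hx1 : (0:ℝ) < x + 1 := by linarith
    have hle : 1 / (x * (x + 1)) * Real.exp (-(x + 1)) ≤ Gexp x := le_Gexp hx
    have hlog : Real.log (1 / (x * (x + 1)) * Real.exp (-(x + 1))) ≤ Real.log (Gexp x) :=
      Real.log_le_log (by positivity) hle
    rw [Real.log_mul (by positivity) (Real.exp_ne_zero _), Real.log_exp,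
      one_div, Real.log_inv, Real.log_mul (ne_of_gt hx) (ne_of_gt hx1)] at hlog
    apply div_le_div_of_nonneg_right ?_ hx.le
    linarith

lemma Gexp_nonpos {t : ℝ} (ht : t ≤ 0) : Gexp t = 0 := by
  apply integral_undef
  intro h
  have h' : IntegrableOn (fun γ => (1/t - 1/γ) * Real.exp (-γ)) (Ioi t) := h
  have h1 : IntegrableOn (fun γ => (1/t - 1/γ) * Real.exp (-γ)) (Ioc 0 1) :=
    h'.mono_set (fun x hx => lt_of_le_of_lt ht hx.1)
  have h2 : IntegrableOn (fun γ => (1/t) * Real.exp (-γ)) (Ioc 0 1) := by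
    have h2' : IntegrableOn (fun x => 1/t * Real.exp (-1 * x)) (Ioi (0:ℝ)) :=
      (exp_neg_integrableOn_Ioi (0:ℝ) one_pos).const_mul (1/t)
    have h2'' := h2'.mono_set (Ioc_subset_Ioi_self : Ioc (0:ℝ) 1 ⊆ Ioi 0)
    simpa using h2''
  have h3 : IntegrableOn (fun γ => (1/γ) * Real.exp (-γ)) (Ioc 0 1) := by
    have hsub : IntegrableOn
        ((fun γ => 1 / t * Real.exp (-γ)) - fun γ => (1 / t - 1 / γ) * Real.exp (-γ))
        (Ioc (0:ℝ) 1) := h2.sub h1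
    refine hsub.congr_fun (fun γ _ => by simp [Pi.sub_apply]; ring) measurableSet_Ioc
  have h4 : IntervalIntegrable (fun γ => (1/γ) * Real.exp (-γ)) volume 0 1 := by
    rw [intervalIntegrable_iff_integrableOn_Ioc_of_le zero_le_one]
    exact h3
  have hO : (fun x : ℝ => (x - 0)⁻¹) =O[𝓝[≠] (0:ℝ)] (fun γ => (1/γ) * Real.exp (-γ)) := by
    rw [Asymptotics.isBigO_iff]
    refine ⟨Real.exp 1, ?_⟩
    have habs : ∀ᶠ x : ℝ in 𝓝[≠] (0:ℝ), |x| < 1 := by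
      refine eventually_nhdsWithin_of_eventually_nhds ?_
      have := Metric.ball_mem_nhds (0:ℝ) one_pos
      filter_upwards [this] with x hx
      simpa [Real.dist_eq] using hx
    filter_upwards [habs] with x hx
    rw [sub_zero, Real.norm_eq_abs, Real.norm_eq_abs, abs_mul, abs_of_pos (Real.exp_pos _)]
    have hexp : Real.exp (-1) ≤ Real.exp (-x) := Real.exp_le_exp.mpr (by
      have := abs_lt.mp hx; linarith)
    have h5 : |1/x| * Real.exp (-1) ≤ |1/x| * Real.exp (-x) :=
      mul_le_mul_of_nonneg_left hexp (abs_nonneg _)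
    have h6 : |x⁻¹| = |1/x| := by rw [one_div]
    rw [h6]
    have h7 : Real.exp 1 * (|1/x| * Real.exp (-1)) = |1/x| := by
      rw [← mul_assoc, mul_comm (Real.exp 1), mul_assoc, ← Real.exp_add]
      simp
    nlinarith [Real.exp_pos (1:ℝ), abs_nonneg (1/x)]
  exact not_intervalIntegrable_of_sub_inv_isBigO_punctured hO one_ne_zero.symm
    (left_mem_uIcc) h4

lemma lamhat_tendsto (lamhat : ℝ → ℝ)
    (h : ∀ᶠ P in 𝓝[>] (0:ℝ), Gexp (lamhat P) = P) :
    Tendsto lamhat (𝓝[>] (0:ℝ)) atTop := by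
  rw [tendsto_atTop]
  intro C
  set C' : ℝ := max C 1 with hC'
  have hC'1 : (1:ℝ) ≤ C' := le_max_right _ _
  have hC'0 : (0:ℝ) < C' := lt_of_lt_of_le one_pos hC'1
  set c : ℝ := 1 / (C' * (C' + 1)) * Real.exp (-(C' + 1)) with hc
  have hcpos : 0 < c := by positivity
  have hmem : Ioo (0:ℝ) c ∈ 𝓝[>] (0:ℝ) :=
    Ioo_mem_nhdsGT_of_mem ⟨le_refl 0, hcpos⟩
  filter_upwards [h, hmem] with P hGP hPm
  obtain ⟨hP0, hPc⟩ := hPm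
  by_contra hlt
  push_neg at hlt
  set l := lamhat P with hl
  have hlC' : l < C' := lt_of_lt_of_le hlt (le_max_left _ _)
  have hl0 : 0 < l := by
    by_contra hle
    push_neg at hle
    rw [Gexp_nonpos hle] at hGP
    linarith
  have hlow : 1 / (l * (l + 1)) * Real.exp (-(l + 1)) ≤ Gexp l := le_Gexp hl0
  have hmono1 : 1 / (C' * (C' + 1)) ≤ 1 / (l * (l + 1)) := by
    apply one_div_le_one_div_of_le (by positivity)
    nlinarith
  have hmono2 : Real.exp (-(C' + 1)) ≤ Real.exp (-(l + 1)) :=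
    Real.exp_le_exp.mpr (by linarith)
  have : c ≤ Gexp l := by
    calc c = 1 / (C' * (C' + 1)) * Real.exp (-(C' + 1)) := hc
      _ ≤ 1 / (l * (l + 1)) * Real.exp (-(l + 1)) := by
          apply mul_le_mul hmono1 hmono2 (Real.exp_pos _).le (by positivity)
      _ ≤ Gexp l := hlow
  rw [hGP] at this
  linarith


/-- Example 1 (Rayleigh fading): `(−log G(λ))/λ → 1` as `λ → ∞`; equivalently, any
water level `λ̂(P̄)` with `G(λ̂(P̄)) = P̄` satisfies `λ̂(P̄)/log(1/P̄) → 1` as `P̄ → 0⁺`,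
and in particular `λ̂(α·P̄) ≈ λ̂(P̄)` for every fixed `α ∈ (0,1]`, so time-sharing is
asymptotically optimal for the broadcast channel with independent Rayleigh fading. -/
theorem rayleigh_waterlevel_asymptotics :
    Tendsto (fun lam => -Real.log (Gexp lam) / lam) atTop (nhds 1) ∧
      ∀ lamhat : ℝ → ℝ,
        (∀ᶠ P in 𝓝[>] (0:ℝ), Gexp (lamhat P) = P) →
          Tendsto (fun P => lamhat P / Real.log (1 / P)) (𝓝[>] (0:ℝ)) (nhds 1) ∧
          ∀ α ∈ Set.Ioc (0:ℝ) 1,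
            Tendsto (fun P => lamhat (α * P) / lamhat P) (𝓝[>] (0:ℝ)) (nhds 1) := by
  refine ⟨main_limit, ?_⟩
  intro lamhat h
  have hfull : Tendsto lamhat (𝓝[>] (0:ℝ)) atTop := lamhat_tendsto lamhat h
  have hcomp : Tendsto (fun P => -Real.log (Gexp (lamhat P)) / lamhat P) (𝓝[>] (0:ℝ))
      (nhds 1) := main_limit.comp hfull
  have hB' : Tendsto (fun P => Real.log (1/P) / lamhat P) (𝓝[>] (0:ℝ)) (nhds 1) := by
    refine hcomp.congr' ?_
    filter_upwards [h, self_mem_nhdsWithin] with P hGP hP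
    rw [hGP, one_div, Real.log_inv]
  have hB : Tendsto (fun P => lamhat P / Real.log (1/P)) (𝓝[>] (0:ℝ)) (nhds 1) := by
    have := hB'.inv₀ one_ne_zero
    rw [inv_one] at this
    refine this.congr ?_
    intro P
    simp [Pi.inv_apply, inv_div]
  refine ⟨hB, ?_⟩
  rintro α ⟨hα0, hα1⟩
  have hmap : Tendsto (fun P => α * P) (𝓝[>] (0:ℝ)) (𝓝[>] (0:ℝ)) := by
    rw [tendsto_nhdsWithin_iff]
    constructor
    · have : Tendsto (fun P => α * P) (𝓝 (0:ℝ)) (𝓝 (α * 0)) :=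
        (continuous_const.mul continuous_id).tendsto 0
      rw [mul_zero] at this
      exact this.mono_left nhdsWithin_le_nhds
    · filter_upwards [self_mem_nhdsWithin] with P hP
      exact mul_pos hα0 hP
  have hlog : Tendsto (fun P : ℝ => Real.log (1/P)) (𝓝[>] (0:ℝ)) atTop := by
    have : Tendsto (fun P : ℝ => (1:ℝ)/P) (𝓝[>] (0:ℝ)) atTop := by
      simpa [one_div] using (tendsto_inv_nhdsGT_zero : Tendsto (fun x : ℝ => x⁻¹) (𝓝[>] (0:ℝ)) atTop)
    exact Real.tendsto_log_atTop.comp this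
  have hlogne : ∀ᶠ P in 𝓝[>] (0:ℝ), 0 < Real.log (1/P) :=
    hlog.eventually (eventually_gt_atTop 0)
  have hlogne' : ∀ᶠ P in 𝓝[>] (0:ℝ), 0 < Real.log (1/(α*P)) :=
    hmap.eventually hlogne
  have hmid : Tendsto (fun P => Real.log (1/(α*P)) / Real.log (1/P)) (𝓝[>] (0:ℝ)) (nhds 1) := by
    have h0 : Tendsto (fun P => Real.log (1/α) / Real.log (1/P) + 1) (𝓝[>] (0:ℝ))
        (nhds (0 + 1)) :=
      (Tendsto.div_atTop tendsto_const_nhds hlog).add tendsto_const_nhds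
    rw [zero_add] at h0
    refine h0.congr' ?_
    filter_upwards [self_mem_nhdsWithin, hlogne] with P hP hlP
    have hP0 : (0:ℝ) < P := hP
    have : (1:ℝ)/(α*P) = (1/α) * (1/P) := by field_simp
    rw [this, Real.log_mul (by positivity) (by positivity)]
    field_simp
  have hfirst : Tendsto (fun P => lamhat (α*P) / Real.log (1/(α*P))) (𝓝[>] (0:ℝ)) (nhds 1) :=
    hB.comp hmap
  have hprod := (hfirst.mul hmid).mul hB'
  rw [show (1:ℝ) * 1 * 1 = 1 by norm_num] at hprod
  refine hprod.congr' ?_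
  filter_upwards [hlogne, hlogne', hfull.eventually (eventually_gt_atTop 0)] with P h1 h2 h3
  field_simp
end

section
/- For the log-logistic density f(x) = 1/(1+x)² on (0,∞), with cumulative distribution F(t) = t/(1+t): (a) the generalized failure rate satisfies t·f(t)/(1 − F(t)) → 1 as t → ∞ (so l = 1); (b) the function G(λ) = ∫_λ^∞ (1/λ − 1/γ)/(1+γ)² dγ satisfies λ²·G(λ) → 1/2 as λ → ∞. Consequently, any function λ̂(P̄) satisfying G(λ̂(P̄)) = P̄ for all sufficiently small P̄ > 0 obeys λ̂(α·P̄)/λ̂(P̄) → α^{−1/2} as P̄ → 0⁺ for each fixed α ∈ (0,1); since this limit differs from 1, time-sharing is strictly suboptimal for the broadcast channel with i.i.d. log-logistic fading. (Example 2.) -/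
open MeasureTheory Filter Set Topology

/-- The average-power function `G(λ) = ∫_λ^∞ (1/λ − 1/γ)/(1+γ)² dγ` for the
log-logistic density `f(x) = 1/(1+x)²`. -/
noncomputable def Gll (t : ℝ) : ℝ := ∫ γ in Set.Ioi t, (1 / t - 1 / γ) * (1 / (1 + γ) ^ 2)


lemma Gll_eq {t : ℝ} (ht : 0 < t) : Gll t = 1 / t - Real.log (1 + 1 / t) := by
  have key : ∫ γ in Set.Ioi t, (1 / t - 1 / γ) * (1 / (1 + γ) ^ 2)
      = 0 - (-(1 / (t * (1 + t))) - Real.log t + Real.log (1 + t) - 1 / (1 + t)) := by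
    apply integral_Ioi_of_hasDerivAt_of_nonneg
      (g := fun γ => -(1 / (t * (1 + γ))) - Real.log γ + Real.log (1 + γ) - 1 / (1 + γ))
    · apply ContinuousAt.continuousWithinAt
      have c1 : ContinuousAt (fun γ : ℝ => t * (1 + γ)) t := by fun_prop
      have c2 : ContinuousAt (fun γ : ℝ => 1 + γ) t := by fun_prop
      exact (((continuousAt_const.div c1 (by positivity)).neg.sub
        (Real.continuousAt_log ht.ne')).add
        ((Real.continuousAt_log (by positivity)).comp c2)).sub
        (continuousAt_const.div c2 (by positivity))
    · intro x hx
      have hx0 : 0 < x := ht.trans hx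
      have hx1 : 0 < 1 + x := by linarith
      have h1 : HasDerivAt (fun γ : ℝ => -(1 / (t * (1 + γ))))
          (1 / (t * (1 + x) ^ 2)) x := by
        have : HasDerivAt (fun γ : ℝ => t * (1 + γ)) t x := by
          simpa using ((hasDerivAt_id x).const_add 1).const_mul t
        have h2 := ((hasDerivAt_const x (1:ℝ)).div this (by positivity)).neg
        refine h2.congr_deriv ?_
        field_simp
        ring
      have h2 : HasDerivAt (fun γ : ℝ => Real.log γ) (1 / x) x := by
        simpa [one_div] using Real.hasDerivAt_log hx0.ne'
      have h3 : HasDerivAt (fun γ : ℝ => Real.log (1 + γ)) (1 / (1 + x)) x := by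
        have := (Real.hasDerivAt_log hx1.ne').comp x (((hasDerivAt_id x).const_add 1))
        simpa [one_div, Function.comp_def] using this
      have h4 : HasDerivAt (fun γ : ℝ => 1 / (1 + γ)) (-(1 / (1 + x) ^ 2)) x := by
        have := (hasDerivAt_const x (1:ℝ)).div (((hasDerivAt_id x).const_add 1)) hx1.ne'
        refine this.congr_deriv ?_
        simp only [id]
        field_simp
        ring
      have := ((h1.sub h2).add h3).sub h4
      refine this.congr_deriv ?_
      field_simp
      ring
    · intro x hx
      have hx0 : 0 < x := ht.trans hx
      have : 1 / x ≤ 1 / t := one_div_le_one_div_of_le ht (le_of_lt hx)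
      have : 0 ≤ 1 / t - 1 / x := by linarith
      positivity
    · have l1 : Tendsto (fun γ : ℝ => -(1 / (t * (1 + γ)))) atTop (𝓝 0) := by
        rw [show (0:ℝ) = -0 by norm_num]
        apply Tendsto.neg
        apply Tendsto.div_atTop tendsto_const_nhds
        exact (tendsto_atTop_add_const_left _ 1 tendsto_id).const_mul_atTop ht
      have l2 : Tendsto (fun γ : ℝ => Real.log (1 + γ) - Real.log γ) atTop (𝓝 0) := by
        have h : ∀ᶠ γ : ℝ in atTop, Real.log (1 + γ⁻¹) = Real.log (1 + γ) - Real.log γ := by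
          filter_upwards [eventually_gt_atTop (0:ℝ)] with γ hγ
          rw [← Real.log_div (by positivity) hγ.ne']
          congr 1
          field_simp
          ring
        refine Tendsto.congr' h ?_
        rw [show (0:ℝ) = Real.log 1 by simp]
        exact (Real.continuousAt_log one_ne_zero).tendsto.comp
          (by simpa using (tendsto_inv_atTop_zero (𝕜 := ℝ)).const_add 1)
      have l3 : Tendsto (fun γ : ℝ => 1 / (1 + γ)) atTop (𝓝 0) := by
        apply Tendsto.div_atTop tendsto_const_nhds
        exact tendsto_atTop_add_const_left _ 1 tendsto_id
      have := (l1.add l2).sub l3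
      simpa [sub_add_eq_add_sub] using (by
        convert this using 2 with γ
        ring : Tendsto (fun γ : ℝ => -(1 / (t * (1 + γ))) - Real.log γ + Real.log (1 + γ) - 1 / (1 + γ)) atTop (𝓝 ((0+0)-0)))
  rw [Gll, key]
  have ht1 : (0:ℝ) < 1 + t := by linarith
  rw [show Real.log (1 + 1/t) = Real.log (1+t) - Real.log t by
    rw [← Real.log_div ht1.ne' ht.ne']; congr 1; field_simp; ring]
  field_simp
  ring


lemma Gll_nonpos {t : ℝ} (ht : t ≤ 0) : Gll t = 0 := by
  apply integral_undef
  intro h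
  have hsub : Set.Ioo (0:ℝ) 1 ⊆ Set.Ioi t := fun x hx => lt_of_le_of_lt ht hx.1
  have h' : IntegrableOn (fun γ : ℝ => (1 / t - 1 / γ) * (1 / (1 + γ) ^ 2)) (Set.Ioi t) := h
  have h2 : IntegrableOn (fun γ : ℝ => (1 / t - 1 / γ) * (1 / (1 + γ) ^ 2)) (Set.Ioo 0 1) :=
    h'.mono_set hsub
  have h3 : IntegrableOn (fun γ : ℝ => (1/4) * γ ^ (-1 : ℝ)) (Set.Ioo (0:ℝ) 1) := by
    apply h2.integrable.mono
    · apply Measurable.aestronglyMeasurable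
      fun_prop
    · filter_upwards [ae_restrict_mem measurableSet_Ioo] with γ hγ
      have hγ0 : 0 < γ := hγ.1
      have hγ1 : γ < 1 := hγ.2
      rw [Real.rpow_neg_one]
      have e1 : ‖(1/4 : ℝ) * γ⁻¹‖ = (1/4) * γ⁻¹ := by
        rw [Real.norm_eq_abs, abs_of_nonneg (by positivity)]
      have hti : 1 / t ≤ 0 := by
        rcases eq_or_lt_of_le ht with h | h
        · simp [h]
        · exact le_of_lt (div_neg_of_pos_of_neg one_pos h)
      have e2 : ‖(1 / t - 1 / γ) * (1 / (1 + γ) ^ 2)‖ = (1/γ - 1/t) * (1 / (1 + γ) ^ 2) := by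
        rw [Real.norm_eq_abs, abs_mul, abs_of_nonpos (by
          have : 0 < 1/γ := by positivity
          linarith), abs_of_nonneg (by positivity)]
        ring
      rw [e1, e2]
      have hb : (1/4 : ℝ) ≤ 1 / (1 + γ) ^ 2 := by
        rw [div_le_div_iff₀ (by norm_num) (by positivity)]
        nlinarith
      have hc : (1:ℝ)/γ ≤ 1/γ - 1/t := by linarith
      calc (1/4 : ℝ) * γ⁻¹ ≤ (1 / (1 + γ) ^ 2) * γ⁻¹ := by
            apply mul_le_mul_of_nonneg_right hb (by positivity)
        _ ≤ (1/γ - 1/t) * (1 / (1 + γ) ^ 2) := by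
            rw [mul_comm]
            apply mul_le_mul_of_nonneg_right _ (by positivity)
            rw [← one_div]
            exact hc
  have h4 : IntegrableOn (fun γ : ℝ => γ ^ (-1 : ℝ)) (Set.Ioo (0:ℝ) 1) := by
    have := h3.const_mul 4
    simpa [IntegrableOn] using this
  rw [intervalIntegral.integrableOn_Ioo_rpow_iff one_pos] at h4
  linarith

lemma log_lb {x : ℝ} (hx : 0 ≤ x) : x - x^2/2 ≤ Real.log (1 + x) := by
  have key : MonotoneOn (fun x : ℝ => Real.log (1 + x) - (x - x^2/2)) (Set.Ici 0) := by
    apply monotoneOn_of_deriv_nonneg (convex_Ici 0)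
    · apply ContinuousOn.sub
      · exact (Real.continuousOn_log.comp (by fun_prop) (fun y hy => by
          simp only [Set.mem_Ici] at hy
          intro h; simp at h; linarith)).congr (fun y _ => rfl)
      · fun_prop
    · intro y hy
      rw [interior_Ici] at hy
      have hy0 : 0 < y := hy
      have h1 : HasDerivAt (fun x : ℝ => Real.log (1 + x) - (x - x^2/2))
          (1/(1+y) - (1 - y)) y := by
        have hl : HasDerivAt (fun x : ℝ => Real.log (1 + x)) (1/(1+y)) y := by
          have := (Real.hasDerivAt_log (by positivity : (0:ℝ) < 1 + y).ne').comp y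
            ((hasDerivAt_id y).const_add 1)
          simpa [one_div, Function.comp_def] using this
        have hp : HasDerivAt (fun x : ℝ => x - x^2/2) (1 - y) y := by
          have := ((hasDerivAt_id y).sub (((hasDerivAt_pow 2 y)).div_const 2))
          refine this.congr_deriv ?_
          push_cast
          ring
        exact hl.sub hp
      · exact (DifferentiableAt.differentiableWithinAt h1.differentiableAt)
    · intro y hy
      rw [interior_Ici] at hy
      have hy0 : 0 < y := hy
      have h1 : HasDerivAt (fun x : ℝ => Real.log (1 + x) - (x - x^2/2))
          (1/(1+y) - (1 - y)) y := by
        have hl : HasDerivAt (fun x : ℝ => Real.log (1 + x)) (1/(1+y)) y := by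
          have := (Real.hasDerivAt_log (by positivity : (0:ℝ) < 1 + y).ne').comp y
            ((hasDerivAt_id y).const_add 1)
          simpa [one_div, Function.comp_def] using this
        have hp : HasDerivAt (fun x : ℝ => x - x^2/2) (1 - y) y := by
          have := ((hasDerivAt_id y).sub (((hasDerivAt_pow 2 y)).div_const 2))
          refine this.congr_deriv ?_
          push_cast
          ring
        exact hl.sub hp
      rw [h1.deriv]
      have : (1:ℝ)/(1+y) - (1 - y) = y^2/(1+y) := by field_simp; ring
      rw [this]
      positivity
  have := key (Set.self_mem_Ici) (Set.mem_Ici.2 hx) hx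
  simp only [Real.log_one, add_zero] at this
  simp at this
  linarith

lemma log_ub {x : ℝ} (hx : 0 ≤ x) : Real.log (1 + x) ≤ x - x^2/2 + x^3/3 := by
  have key : MonotoneOn (fun x : ℝ => (x - x^2/2 + x^3/3) - Real.log (1 + x)) (Set.Ici 0) := by
    apply monotoneOn_of_deriv_nonneg (convex_Ici 0)
    · apply ContinuousOn.sub
      · fun_prop
      · exact (Real.continuousOn_log.comp (by fun_prop) (fun y hy => by
          simp only [Set.mem_Ici] at hy
          intro h; simp at h; linarith)).congr (fun y _ => rfl)
    all_goals {
      intro y hy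
      rw [interior_Ici] at hy
      have hy0 : 0 < y := hy
      have h1 : HasDerivAt (fun x : ℝ => (x - x^2/2 + x^3/3) - Real.log (1 + x))
          ((1 - y + y^2) - 1/(1+y)) y := by
        have hl : HasDerivAt (fun x : ℝ => Real.log (1 + x)) (1/(1+y)) y := by
          have := (Real.hasDerivAt_log (by positivity : (0:ℝ) < 1 + y).ne').comp y
            ((hasDerivAt_id y).const_add 1)
          simpa [one_div, Function.comp_def] using this
        have hp : HasDerivAt (fun x : ℝ => x - x^2/2 + x^3/3) (1 - y + y^2) y := by
          have := (((hasDerivAt_id y).sub ((hasDerivAt_pow 2 y).div_const 2)).add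
            ((hasDerivAt_pow 3 y).div_const 3))
          refine this.congr_deriv ?_
          push_cast
          ring
        exact hp.sub hl
      first
      | exact h1.differentiableAt.differentiableWithinAt
      | · rw [h1.deriv]
          have : (1:ℝ) - y + y^2 - 1/(1+y) = y^3/(1+y) := by field_simp; ring
          rw [this]
          positivity }
  have := key (Set.self_mem_Ici) (Set.mem_Ici.2 hx) hx
  norm_num at this
  linarith

lemma phi_strictMono : StrictMonoOn (fun x : ℝ => x - Real.log (1 + x)) (Set.Ici 0) := by
  apply strictMonoOn_of_deriv_pos (convex_Ici 0)
  · apply ContinuousOn.sub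
    · fun_prop
    · exact (Real.continuousOn_log.comp (by fun_prop) (fun y hy => by
        simp only [Set.mem_Ici] at hy
        intro h; simp at h; linarith)).congr (fun y _ => rfl)
  · intro y hy
    rw [interior_Ici] at hy
    have hy0 : 0 < y := hy
    have h1 : HasDerivAt (fun x : ℝ => x - Real.log (1 + x)) (1 - 1/(1+y)) y := by
      have hl : HasDerivAt (fun x : ℝ => Real.log (1 + x)) (1/(1+y)) y := by
        have := (Real.hasDerivAt_log (by positivity : (0:ℝ) < 1 + y).ne').comp y
          ((hasDerivAt_id y).const_add 1)
        simpa [one_div, Function.comp_def] using this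
      exact (hasDerivAt_id y).sub hl
    rw [h1.deriv]
    have : (1:ℝ) - 1/(1+y) = y/(1+y) := by field_simp; ring
    rw [this]
    positivity

lemma Gll_pos {t : ℝ} (ht : 0 < t) : 0 < Gll t := by
  rw [Gll_eq ht]
  have h1 : (0:ℝ) < 1/t := by positivity
  have := phi_strictMono (Set.self_mem_Ici) (Set.mem_Ici.2 h1.le) h1
  simpa using this

lemma Gll_anti {s M : ℝ} (hs : 0 < s) (hsM : s ≤ M) : Gll M ≤ Gll s := by
  have hM : 0 < M := lt_of_lt_of_le hs hsM
  rw [Gll_eq hs, Gll_eq hM]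
  have h1 : (0:ℝ) < 1/M := by positivity
  have h2 : 1/M ≤ 1/s := one_div_le_one_div_of_le hs hsM
  exact phi_strictMono.monotoneOn (Set.mem_Ici.2 h1.le)
    (Set.mem_Ici.2 (h1.le.trans h2)) h2

lemma tendsto_sq_Gll : Tendsto (fun lam : ℝ => lam ^ 2 * Gll lam) atTop (nhds (1 / 2)) := by
  have hψ : Tendsto (fun x : ℝ => (x - Real.log (1 + x)) / x ^ 2) (𝓝[>] (0:ℝ))
      (𝓝 (1/2)) := by
    apply tendsto_of_tendsto_of_tendsto_of_le_of_le'
      (g := fun x : ℝ => 1/2 - x/3) (h := fun _ : ℝ => 1/2)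
    · have : Tendsto (fun x : ℝ => 1/2 - x/3) (𝓝 (0:ℝ)) (𝓝 (1/2 - 0/3)) :=
        ((continuous_const.sub (continuous_id.div_const 3)).tendsto 0)
      simpa using this.mono_left nhdsWithin_le_nhds
    · exact tendsto_const_nhds
    · filter_upwards [self_mem_nhdsWithin] with x hx
      have hx0 : 0 < x := hx
      rw [le_div_iff₀ (by positivity)]
      have := log_ub hx0.le
      nlinarith
    · filter_upwards [self_mem_nhdsWithin] with x hx
      have hx0 : 0 < x := hx
      rw [div_le_iff₀ (by positivity)]
      have := log_lb hx0.le
      nlinarith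
  have comp := hψ.comp tendsto_inv_atTop_nhdsGT_zero
  apply comp.congr'
  filter_upwards [eventually_gt_atTop (0:ℝ)] with lam hlam
  simp only [Function.comp]
  rw [Gll_eq hlam, one_div]
  have h2 : (lam⁻¹:ℝ) ^ 2 = (lam ^ 2)⁻¹ := by rw [inv_pow]
  rw [h2, div_eq_mul_inv, inv_inv]
  ring

/-- Example 2 (log-logistic fading): (a) the generalized failure rate tends to `1`;
(b) `λ²·G(λ) → 1/2` as `λ → ∞`; consequently any water level `λ̂(P̄)` with
`G(λ̂(P̄)) = P̄` for small `P̄ > 0` obeys `λ̂(α·P̄)/λ̂(P̄) → α^{−1/2} ≠ 1` as `P̄ → 0⁺`,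
so time-sharing is strictly suboptimal for this broadcast fading channel. -/
theorem loglogistic_waterlevel_asymptotics :
    Tendsto (fun t : ℝ => t * (1 / (1 + t) ^ 2) / (1 - t / (1 + t))) atTop (nhds 1) ∧
    Tendsto (fun lam : ℝ => lam ^ 2 * Gll lam) atTop (nhds (1 / 2)) ∧
      ∀ lamhat : ℝ → ℝ,
        (∀ᶠ P in 𝓝[>] (0:ℝ), Gll (lamhat P) = P) →
          ∀ α ∈ Set.Ioo (0:ℝ) 1,
            Tendsto (fun P => lamhat (α * P) / lamhat P) (𝓝[>] (0:ℝ))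
                (nhds (α ^ (-(1:ℝ) / 2))) ∧
              α ^ (-(1:ℝ) / 2) ≠ 1 := by
  refine ⟨?_, tendsto_sq_Gll, ?_⟩
  · have lim : Tendsto (fun t : ℝ => 1 - 1 / (1 + t)) atTop (𝓝 (1 - 0)) := by
      apply Tendsto.const_sub
      apply Tendsto.div_atTop tendsto_const_nhds
      exact tendsto_atTop_add_const_left _ 1 tendsto_id
    rw [show (1:ℝ) - 0 = 1 by norm_num] at lim
    apply lim.congr'
    filter_upwards [eventually_gt_atTop (0:ℝ)] with t ht
    have h1 : (0:ℝ) < 1 + t := by linarith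
    field_simp
    ring
  · intro lamhat hG α hα
    obtain ⟨hα0, hα1⟩ := hα
    have hmem : ∀ᶠ P in 𝓝[>] (0:ℝ), 0 < P := eventually_mem_nhdsWithin
    have hpos : ∀ᶠ P in 𝓝[>] (0:ℝ), 0 < lamhat P := by
      filter_upwards [hG, hmem] with P h1 h2
      by_contra hle
      push_neg at hle
      rw [Gll_nonpos hle] at h1
      linarith
    have hmapα : Tendsto (fun P : ℝ => α * P) (𝓝[>] (0:ℝ)) (𝓝[>] (0:ℝ)) := by
      apply tendsto_nhdsWithin_of_tendsto_nhds_of_eventually_within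
      · have : Tendsto (fun P:ℝ => α*P) (𝓝 (0:ℝ)) (𝓝 (α*0)) :=
          (continuous_const.mul continuous_id).tendsto 0
        rw [mul_zero] at this
        exact this.mono_left nhdsWithin_le_nhds
      · filter_upwards [hmem] with P hP
        exact mul_pos hα0 hP
    have hGα : ∀ᶠ P in 𝓝[>] (0:ℝ), Gll (lamhat (α*P)) = α*P := hmapα.eventually hG
    have hposα : ∀ᶠ P in 𝓝[>] (0:ℝ), 0 < lamhat (α*P) := hmapα.eventually hpos
    have hTop : Tendsto lamhat (𝓝[>] (0:ℝ)) atTop := by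
      rw [tendsto_atTop]
      intro M
      have hM' : (0:ℝ) < max M 1 := lt_of_lt_of_le one_pos (le_max_right _ _)
      have hev : ∀ᶠ P in 𝓝[>] (0:ℝ), P < Gll (max M 1) :=
        (eventually_lt_nhds (Gll_pos hM')).filter_mono nhdsWithin_le_nhds
      filter_upwards [hG, hpos, hev] with P h1 h2 h3
      by_contra hlt
      push_neg at hlt
      have hle : lamhat P ≤ max M 1 := le_trans hlt.le (le_max_left _ _)
      have := Gll_anti h2 hle
      rw [h1] at this
      linarith
    have hA : Tendsto (fun P => (lamhat P)^2 * P) (𝓝[>] (0:ℝ)) (𝓝 (1/2)) := by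
      apply (tendsto_sq_Gll.comp hTop).congr'
      filter_upwards [hG] with P h
      simp only [Function.comp, h]
    have hAα : Tendsto (fun P => (lamhat (α*P))^2 * (α*P)) (𝓝[>] (0:ℝ)) (𝓝 (1/2)) :=
      hA.comp hmapα
    have hR2 : Tendsto (fun P => (lamhat (α*P)/lamhat P)^2) (𝓝[>] (0:ℝ)) (𝓝 (α⁻¹)) := by
      have hdiv := (hAα.div hA (by norm_num)).mul_const α⁻¹
      rw [show (1:ℝ)/2/(1/2) * α⁻¹ = α⁻¹ by norm_num] at hdiv
      apply hdiv.congr'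
      filter_upwards [hmem, hpos, hposα] with P h0 h1 h2
      simp only [Pi.div_apply]
      field_simp
    have hsq := ((Real.continuous_sqrt.tendsto _).comp hR2)
    have hval : Real.sqrt α⁻¹ = α ^ (-(1:ℝ)/2) := by
      rw [Real.sqrt_eq_rpow, ← Real.rpow_neg_one α, ← Real.rpow_mul hα0.le]
      norm_num
    constructor
    · rw [← hval]
      apply hsq.congr'
      filter_upwards [hpos, hposα] with P h1 h2
      simp only [Function.comp]
      rw [Real.sqrt_sq (by positivity)]
    · have : 1 < α ^ (-(1:ℝ)/2) := by
        rw [Real.one_lt_rpow_iff_of_pos hα0]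
        right
        constructor
        · exact hα1
        · norm_num
      exact ne_of_gt this
end

section
/- Let g : (0,∞) → (0,∞) be a nonincreasing function that is integrable on (0,1), and fix α ∈ (0,1). If g(α·P)/g(P) → 1 as P → 0⁺, then (∫₀^{αP} g(t) dt)/(α·∫₀^P g(t) dt) → 1 as P → 0⁺. Applied with g = G_k⁻¹ (the inverse water level function of user k), this gives C_k(α·P̄) ≈ α·C_k(P̄), i.e. the condition λ_k(α·P̄) ≈ λ_k(P̄) of (E5A04) implies that time-sharing asymptotically achieves the boundary of the broadcast channel capacity region. (Sufficiency direction of the time-sharing optimality criterion (E5A03)–(E5A04).) -/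
open MeasureTheory Filter Set Topology

/-- Sufficiency direction of the time-sharing optimality criterion
(E5A03)–(E5A04): if `g = G_k⁻¹` is positive, nonincreasing on `(0,∞)`, integrable
on `(0,1)`, and satisfies `g(α·P)/g(P) → 1` as `P → 0⁺`, then
`(∫₀^{αP} g)/(α·∫₀^P g) → 1` as `P → 0⁺`, i.e. `C_k(α·P̄) ≈ α·C_k(P̄)` and
time-sharing asymptotically achieves the broadcast capacity boundary. -/
theorem timesharing_sufficiency (g : ℝ → ℝ) (α : ℝ)
    (hα : α ∈ Set.Ioo (0:ℝ) 1)
    (hgpos : ∀ x ∈ Set.Ioi (0:ℝ), 0 < g x)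
    (hganti : AntitoneOn g (Set.Ioi (0:ℝ)))
    (hgint : IntegrableOn g (Set.Ioo (0:ℝ) 1))
    (hratio : Tendsto (fun P => g (α * P) / g P) (𝓝[>] (0:ℝ)) (nhds 1)) :
    Tendsto
      (fun P => (∫ t in (0:ℝ)..(α * P), g t) / (α * ∫ t in (0:ℝ)..P, g t))
      (𝓝[>] (0:ℝ)) (nhds 1) := by
  obtain ⟨hα0, hα1⟩ := hα
  rw [Metric.tendsto_nhds]
  intro ε hε
  -- get δ from hratio
  have h2 : ∀ᶠ u in 𝓝[>] (0:ℝ), dist (g (α * u) / g u) 1 < ε/2 :=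
    Metric.tendsto_nhds.mp hratio (ε/2) (by linarith)
  rw [(nhdsGT_basis (0:ℝ)).eventually_iff] at h2
  obtain ⟨δ, hδ0, hδ⟩ := h2
  rw [(nhdsGT_basis (0:ℝ)).eventually_iff]
  refine ⟨min δ 1, lt_min hδ0 one_pos, ?_⟩
  intro P hP
  obtain ⟨hP0, hP1⟩ := hP
  have hPδ : P < δ := lt_of_lt_of_le hP1 (min_le_left _ _)
  have hP1' : P < 1 := lt_of_lt_of_le hP1 (min_le_right _ _)
  -- integrability
  have hint : IntervalIntegrable g volume 0 P := by
    rw [intervalIntegrable_iff_integrableOn_Ioc_of_le hP0.le]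
    exact hgint.mono_set (fun x hx => ⟨hx.1, lt_of_le_of_lt hx.2 hP1'⟩)
  have hintc : IntervalIntegrable (fun s => g (α * s)) volume 0 P := by
    have := (hint.mono_set (by
      rw [uIcc_of_le (by positivity : (0:ℝ) ≤ α * P), uIcc_of_le hP0.le]
      exact Icc_subset_Icc le_rfl (by nlinarith) : uIcc 0 (α * P) ⊆ uIcc 0 P)).comp_mul_left (c := α)
    simpa [hα0.ne'] using this
  -- substitution
  have hsub : (∫ t in (0:ℝ)..(α * P), g t) = α * ∫ s in (0:ℝ)..P, g (α * s) := by
    have := intervalIntegral.smul_integral_comp_mul_left g (a := 0) (b := P) α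
    simp only [mul_zero, smul_eq_mul] at this
    rw [← this]
  -- positivity of ∫₀^P g
  have hBpos : 0 < ∫ t in (0:ℝ)..P, g t :=
    intervalIntegral.intervalIntegral_pos_of_pos_on hint
      (fun x hx => hgpos x hx.1) hP0
  -- a.e. bounds
  have hae : ∀ (f₁ f₂ : ℝ → ℝ), (∀ x ∈ Ioc (0:ℝ) P, f₁ x ≤ f₂ x) →
      f₁ ≤ᵐ[volume.restrict (Icc (0:ℝ) P)] f₂ := by
    intro f₁ f₂ hc
    have h0 : ∀ᵐ x ∂(volume.restrict (Icc (0:ℝ) P)), x ≠ 0 := by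
      refine ae_restrict_of_ae ?_
      rw [ae_iff]
      have : {x : ℝ | ¬ x ≠ 0} = {0} := by ext x; simp
      rw [this]; exact Real.volume_singleton
    filter_upwards [h0, ae_restrict_mem measurableSet_Icc] with x hx0 hxm
    exact hc x ⟨lt_of_le_of_ne hxm.1 (Ne.symm hx0), hxm.2⟩
  -- lower bound: ∫ g(αs) ≥ ∫ g
  have hlow : (∫ t in (0:ℝ)..P, g t) ≤ ∫ s in (0:ℝ)..P, g (α * s) := by
    refine intervalIntegral.integral_mono_ae_restrict hP0.le hint hintc (hae _ _ ?_)
    intro x hx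
    exact hganti (mul_pos hα0 hx.1) hx.1 (by nlinarith [hx.1])
  -- upper bound: ∫ g(αs) ≤ (1+ε/2) ∫ g
  have hup : (∫ s in (0:ℝ)..P, g (α * s)) ≤ (1 + ε/2) * ∫ t in (0:ℝ)..P, g t := by
    have h1 : (∫ s in (0:ℝ)..P, (1 + ε/2) * g s) = (1 + ε/2) * ∫ t in (0:ℝ)..P, g t := by
      rw [intervalIntegral.integral_const_mul]
    rw [← h1]
    refine intervalIntegral.integral_mono_ae_restrict hP0.le hintc (hint.const_mul _) ?_
    refine hae _ _ ?_
    intro x hx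
    have hgx : 0 < g x := hgpos x hx.1
    have hd := hδ ⟨hx.1, lt_of_le_of_lt hx.2 hPδ⟩
    rw [Real.dist_eq, abs_lt] at hd
    have : g (α * x) / g x < 1 + ε/2 := by linarith [hd.2]
    calc g (α * x) = (g (α * x) / g x) * g x := by field_simp
    _ ≤ (1 + ε/2) * g x := by nlinarith
  -- conclude
  rw [hsub, Real.dist_eq]
  have hαB : 0 < α * ∫ t in (0:ℝ)..P, g t := mul_pos hα0 hBpos
  have heq : α * (∫ s in (0:ℝ)..P, g (α * s)) / (α * ∫ t in (0:ℝ)..P, g t)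
      = (∫ s in (0:ℝ)..P, g (α * s)) / (∫ t in (0:ℝ)..P, g t) := by
    rw [mul_div_mul_left _ _ hα0.ne']
  rw [heq, abs_lt]
  constructor
  · have : 1 ≤ (∫ s in (0:ℝ)..P, g (α * s)) / (∫ t in (0:ℝ)..P, g t) :=
      (one_le_div hBpos).mpr hlow
    linarith
  · have : (∫ s in (0:ℝ)..P, g (α * s)) / (∫ t in (0:ℝ)..P, g t) ≤ 1 + ε/2 :=
      (div_le_iff₀ hBpos).mpr (by linarith [hup])
    linarith
end
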